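/- arXiv:2501.12480 — 7 statements merged into one kernel-verified Lean document; each statement's English description precedes it below -/
import Mathlib

section
/- (Upper large-deviation bound for self-normalized sums) Let p > 1 and let X satisfy P(X > 0) > 0. Then for every z with z > 0 and z > z*: limsup_{n→∞} n^{−1}·ln P(A_n(z)) ≤ J_z := sup_{c ≥ 0} inf_{t ≥ 0} ln E exp{t(cX − (z/p)(|X|^p + (p−1)c^{p/(p−1)}))}, the inequality being in the extended real line. -/
open MeasureTheory ProbabilityTheory Real Filter Set
open scoped ENNReal Classical

namespace SelfNormAux

/-- The function appearing in the exponent. -/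
noncomputable def G (z p c x : ℝ) : ℝ :=
  c * x - z / p * (|x| ^ p + (p - 1) * c ^ (p / (p - 1)))

lemma exists_bound (z p a : ℝ) (hz : 0 < z) (hp : 1 < p) (ha : 0 ≤ a) :
    ∃ M : ℝ, 0 ≤ M ∧ ∀ x : ℝ, a * x - z / p * |x| ^ p ≤ M := by
  have hp0 : (0:ℝ) < p := lt_trans one_pos hp
  have hp1 : (0:ℝ) < p - 1 := by linarith
  set R : ℝ := max 1 ((p * a / z) ^ (1 / (p - 1))) with hR
  have hR1 : (1:ℝ) ≤ R := le_max_left _ _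
  have hR0 : (0:ℝ) ≤ R := by linarith
  refine ⟨a * R, mul_nonneg ha hR0, fun x => ?_⟩
  have hzp : 0 ≤ z / p := le_of_lt (div_pos hz hp0)
  have habs : a * x ≤ a * |x| := mul_le_mul_of_nonneg_left (le_abs_self x) ha
  rcases le_or_gt |x| R with h | h
  · have h1 : a * |x| ≤ a * R := mul_le_mul_of_nonneg_left h ha
    have h2 : 0 ≤ z / p * |x| ^ p :=
      mul_nonneg hzp (Real.rpow_nonneg (abs_nonneg x) p)
    linarith
  · -- |x| > R ≥ 1 : show a * x ≤ z / p * |x| ^ p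
    have hx0 : (0:ℝ) < |x| := lt_of_lt_of_le (lt_of_lt_of_le one_pos hR1) h.le
    have h0 : (0:ℝ) ≤ p * a / z := div_nonneg (mul_nonneg hp0.le ha) hz.le
    have hRp : p * a / z ≤ R ^ (p - 1) := by
      have h1 : ((p * a / z) ^ (1 / (p - 1))) ^ (p - 1) ≤ R ^ (p - 1) :=
        Real.rpow_le_rpow (Real.rpow_nonneg h0 _) (le_max_right _ _) hp1.le
      have h2 : ((p * a / z) ^ (1 / (p - 1))) ^ (p - 1) = p * a / z := by
        rw [← Real.rpow_mul h0, one_div, inv_mul_cancel₀ hp1.ne', Real.rpow_one]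
      linarith
    have hxp : |x| ^ p = |x| * |x| ^ (p - 1) := by
      rw [← Real.rpow_one_add' (abs_nonneg x) (by linarith : 1 + (p-1) ≠ 0)]
      ring_nf
    have hxR : R ^ (p - 1) ≤ |x| ^ (p - 1) :=
      Real.rpow_le_rpow hR0 h.le hp1.le
    have key : a * |x| ≤ z / p * |x| ^ p := by
      have c1 : p * a / z ≤ |x| ^ (p - 1) := le_trans hRp hxR
      have c2 : (p * a / z) * |x| ≤ |x| ^ (p - 1) * |x| :=
        mul_le_mul_of_nonneg_right c1 (abs_nonneg x)
      rw [hxp]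
      calc a * |x| = z / p * ((p * a / z) * |x|) := by field_simp
        _ ≤ z / p * (|x| ^ (p - 1) * |x|) := mul_le_mul_of_nonneg_left c2 hzp
        _ = z / p * (|x| * |x| ^ (p - 1)) := by ring
    have : 0 ≤ a * R := mul_nonneg ha hR0
    linarith

lemma G_le (z p c a M : ℝ) (hz : 0 < z) (hp : 1 < p) (hc : 0 ≤ c) (hca : c ≤ a)
    (hM : ∀ x : ℝ, a * x - z / p * |x| ^ p ≤ M) (x : ℝ) : G z p c x ≤ M := by
  have hp0 : (0:ℝ) < p := lt_trans one_pos hp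
  have hzp : 0 ≤ z / p := le_of_lt (div_pos hz hp0)
  have h1 : c * x ≤ a * |x| :=
    le_trans (mul_le_mul_of_nonneg_left (le_abs_self x) hc)
      (mul_le_mul_of_nonneg_right hca (abs_nonneg x))
  have h2 : 0 ≤ z / p * ((p - 1) * c ^ (p / (p - 1))) :=
    mul_nonneg hzp (mul_nonneg (by linarith) (Real.rpow_nonneg hc _))
  have h3 := hM |x|
  rw [abs_abs] at h3
  simp only [G, mul_add]
  linarith

lemma G_measurable (z p c : ℝ) : Measurable (G z p c) := by
  unfold G
  fun_prop

lemma exp_integrable {Ω : Type*} [MeasurableSpace Ω] (P : Measure Ω) [IsProbabilityMeasure P]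
    (Y : Ω → ℝ) (hY : Measurable Y) (C : ℝ) (hC : ∀ ω, Y ω ≤ C) :
    Integrable (fun ω => Real.exp (Y ω)) P := by
  refine (integrable_const (Real.exp C)).mono' (hY.exp.aestronglyMeasurable) ?_
  exact ae_of_all _ fun ω => by
    rw [Real.norm_eq_abs, abs_of_pos (Real.exp_pos _)]
    exact Real.exp_le_exp.2 (hC ω)

/-- Chernoff bound for i.i.d. sums of a bounded-above function of the `X j`. -/
lemma chernoff {Ω : Type*} [MeasurableSpace Ω] (P : Measure Ω) [IsProbabilityMeasure P]
    (X : ℕ → Ω → ℝ) (hmeas : ∀ i, Measurable (X i))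
    (hindep : iIndepFun X P)
    (hident : ∀ i, IdentDistrib (X i) (X 0) P P)
    (g : ℝ → ℝ) (hg : Measurable g) (M : ℝ) (hgM : ∀ x, g x ≤ M)
    (t : ℝ) (ht : 0 ≤ t) (a : ℝ) (n : ℕ) :
    P {ω | a * n ≤ ∑ j ∈ Finset.range n, g (X j ω)}
      ≤ ENNReal.ofReal (Real.exp (-t * (a * n)) *
          (∫ ω, Real.exp (t * g (X 0 ω)) ∂P) ^ n) := by
  have hXg : ∀ j, Measurable fun ω => g (X j ω) := fun j => hg.comp (hmeas j)
  have hYmeas : Measurable fun ω => ∑ j ∈ Finset.range n, g (X j ω) :=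
    Finset.measurable_sum _ fun j _ => hXg j
  have hYle : ∀ ω, t * (∑ j ∈ Finset.range n, g (X j ω)) ≤ t * (M * n) := by
    intro ω
    refine mul_le_mul_of_nonneg_left ?_ ht
    calc (∑ j ∈ Finset.range n, g (X j ω)) ≤ ∑ j ∈ Finset.range n, M :=
          Finset.sum_le_sum fun j _ => hgM _
      _ = M * n := by simp [mul_comm]
  have h_int : Integrable (fun ω => Real.exp (t * ∑ j ∈ Finset.range n, g (X j ω))) P :=
    exp_integrable P _ (hYmeas.const_mul t) (t * (M * n)) hYle
  have key := measure_ge_le_exp_mul_mgf (μ := P)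
      (X := fun ω => ∑ j ∈ Finset.range n, g (X j ω)) (a * n) ht h_int
  have hsum_eq : (fun ω => ∑ j ∈ Finset.range n, g (X j ω))
      = ∑ j ∈ Finset.range n, (g ∘ X j) := by
    funext ω; simp [Function.comp]
  have hmgf : mgf (fun ω => ∑ j ∈ Finset.range n, g (X j ω)) P t
      = (∫ ω, Real.exp (t * g (X 0 ω)) ∂P) ^ n := by
    rw [hsum_eq, (hindep.comp (fun _ => g) (fun _ => hg)).mgf_sum
      (fun i => hg.comp (hmeas i))]
    have hone : ∀ j, mgf (g ∘ X j) P t = ∫ ω, Real.exp (t * g (X 0 ω)) ∂P := by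
      intro j
      have hid : IdentDistrib (fun ω => Real.exp (t * g (X j ω)))
          (fun ω => Real.exp (t * g (X 0 ω))) P P :=
        ((hident j).comp hg).comp ((measurable_id.const_mul t).exp)
      exact hid.integral_eq
    rw [Finset.prod_congr rfl fun j _ => hone j, Finset.prod_const, Finset.card_range]
  rw [hmgf] at key
  calc P {ω | a * n ≤ ∑ j ∈ Finset.range n, g (X j ω)}
      = ENNReal.ofReal ((P {ω | a * n ≤ ∑ j ∈ Finset.range n, g (X j ω)}).toReal) :=
        (ENNReal.ofReal_toReal (measure_ne_top P _)).symm
    _ ≤ _ := ENNReal.ofReal_le_ofReal key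

/-- Grid step: on the event, with `T_n/n ∈ [w, v']`, the tilted sum is ≥ -(z(v'-w)/p) n. -/
lemma grid_sum_bound (p z : ℝ) (hp : 1 < p) (hz : 0 < z)
    (n : ℕ) (hn : 1 ≤ n) (x : ℕ → ℝ) (w v' : ℝ) (hw : 0 ≤ w)
    (hEv : z * (n:ℝ) ^ (1 - 1/p) * (∑ j ∈ Finset.range n, |x j| ^ p) ^ (1/p)
        ≤ ∑ j ∈ Finset.range n, x j)
    (hT1 : w * n ≤ ∑ j ∈ Finset.range n, |x j| ^ p)
    (hT2 : (∑ j ∈ Finset.range n, |x j| ^ p) ≤ v' * n) :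
    (-(z * (v' - w) / p)) * n ≤ ∑ j ∈ Finset.range n, G z p (w ^ ((p-1)/p)) (x j) := by
  have hp0 : (0:ℝ) < p := lt_trans one_pos hp
  have hn0 : (0:ℝ) < n := by exact_mod_cast hn
  set S : ℝ := ∑ j ∈ Finset.range n, x j with hS
  set T : ℝ := ∑ j ∈ Finset.range n, |x j| ^ p with hT
  set c : ℝ := w ^ ((p-1)/p) with hc
  have hc0 : 0 ≤ c := Real.rpow_nonneg hw _
  have hcq : c ^ (p / (p - 1)) = w := by
    rw [hc, ← Real.rpow_mul hw]
    have hp1 : p - 1 ≠ 0 := ne_of_gt (by linarith)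
    have : (p - 1) / p * (p / (p - 1)) = 1 := by
      field_simp
    rw [this, Real.rpow_one]
  have hexpand : ∑ j ∈ Finset.range n, G z p c (x j)
      = c * S - z / p * T - (n : ℝ) * (z / p * ((p - 1) * w)) := by
    have hterm : ∀ j, G z p c (x j)
        = c * x j - (z / p * |x j| ^ p + z / p * ((p - 1) * w)) := by
      intro j; simp only [G, hcq]; ring
    rw [Finset.sum_congr rfl (fun j _ => hterm j), Finset.sum_sub_distrib,
      Finset.sum_add_distrib, ← Finset.mul_sum, Finset.sum_const, Finset.card_range,
      nsmul_eq_mul, ← Finset.mul_sum, ← hS, ← hT]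
    ring
  -- S ≥ z * w^(1/p) * n
  have hT0 : 0 ≤ T := Finset.sum_nonneg fun j _ => Real.rpow_nonneg (abs_nonneg _) _
  have hwn : (w * n) ^ (1/p) = w ^ (1/p) * (n:ℝ) ^ (1/p) :=
    Real.mul_rpow hw hn0.le
  have hnn : (n:ℝ) ^ (1 - 1/p) * (n:ℝ) ^ (1/p) = n := by
    rw [← Real.rpow_add hn0]
    norm_num
  have hS1 : z * w ^ (1/p) * n ≤ S := by
    have h1 : (w * n) ^ (1/p) ≤ T ^ (1/p) :=
      Real.rpow_le_rpow (mul_nonneg hw hn0.le) hT1 (by positivity)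
    have h2 : z * (n:ℝ) ^ (1 - 1/p) * (w * n) ^ (1/p)
        ≤ z * (n:ℝ) ^ (1 - 1/p) * T ^ (1/p) := by
      refine mul_le_mul_of_nonneg_left h1 ?_
      positivity
    have h3 : z * (n:ℝ) ^ (1 - 1/p) * (w * n) ^ (1/p) = z * w ^ (1/p) * n := by
      rw [hwn]
      calc z * (n:ℝ) ^ (1 - 1/p) * (w ^ (1/p) * (n:ℝ) ^ (1/p))
          = z * w ^ (1/p) * ((n:ℝ) ^ (1 - 1/p) * (n:ℝ) ^ (1/p)) := by ring
        _ = z * w ^ (1/p) * n := by rw [hnn]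
    linarith [le_trans h2 hEv]
  have hcS : z * w * n ≤ c * S := by
    have h1 : c * (z * w ^ (1/p) * n) ≤ c * S := mul_le_mul_of_nonneg_left hS1 hc0
    have h2 : c * (z * w ^ (1/p) * n) = z * w * n := by
      have hsum1 : (p-1)/p + 1/p = 1 := by field_simp; ring
      have : c * w ^ (1/p) = w := by
        rw [hc, ← Real.rpow_add' hw (by rw [hsum1]; exact one_ne_zero), hsum1, Real.rpow_one]
      calc c * (z * w ^ (1/p) * n) = z * (c * w ^ (1/p)) * n := by ring
        _ = z * w * n := by rw [this]
    linarith
  have hzT : z / p * T ≤ z / p * (v' * n) :=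
    mul_le_mul_of_nonneg_left hT2 (by positivity)
  rw [hexpand]
  have heq : (-(z * (v' - w) / p)) * n
      = z * w * n - z / p * (v' * n) - (n:ℝ) * (z / p * ((p - 1) * w)) := by
    field_simp
    ring
  linarith

/-- Tail step: on the event with `T_n ≥ b^p n`, the truncated normalized sum is large. -/
lemma tail_sum_bound (p z : ℝ) (hp : 1 < p) (hz : 0 < z) (lam : ℝ) (hlam1 : 1 ≤ lam)
    (hlam2 : 2 / z ≤ lam ^ (p - 1)) (b : ℝ) (hb : 0 < b)
    (n : ℕ) (hn : 1 ≤ n) (x : ℕ → ℝ)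
    (hEv : z * (n:ℝ) ^ (1 - 1/p) * (∑ j ∈ Finset.range n, |x j| ^ p) ^ (1/p)
        ≤ ∑ j ∈ Finset.range n, x j)
    (hT : b ^ p * n ≤ ∑ j ∈ Finset.range n, |x j| ^ p) :
    z / (2 * lam) * n ≤ ∑ j ∈ Finset.range n, min (max (x j) 0 / (lam * b)) 1 := by
  have hp0 : (0:ℝ) < p := lt_trans one_pos hp
  have hp1 : (0:ℝ) < p - 1 := by linarith
  have hn0 : (0:ℝ) < n := by exact_mod_cast hn
  have hlam0 : (0:ℝ) < lam := lt_of_lt_of_le one_pos hlam1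
  set S : ℝ := ∑ j ∈ Finset.range n, x j with hS
  set T : ℝ := ∑ j ∈ Finset.range n, |x j| ^ p with hTdef
  have hT0 : 0 ≤ T := Finset.sum_nonneg fun j _ => Real.rpow_nonneg (abs_nonneg _) _
  set r : ℝ := (T / n) ^ (1/p) with hr
  have hTn0 : 0 ≤ T / n := div_nonneg hT0 hn0.le
  have hbr : b ≤ r := by
    have h1 : b ^ p ≤ T / n := (le_div_iff₀ hn0).2 hT
    have h2 : (b ^ p) ^ (1/p) ≤ (T / n) ^ (1/p) :=
      Real.rpow_le_rpow (Real.rpow_nonneg hb.le _) h1 (by positivity)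
    rwa [← Real.rpow_mul hb.le, mul_one_div, div_self hp0.ne', Real.rpow_one] at h2
  have hr0 : 0 < r := lt_of_lt_of_le hb hbr
  have hrp : r ^ p = T / n := by
    rw [hr, ← Real.rpow_mul hTn0, one_div, inv_mul_cancel₀ hp0.ne', Real.rpow_one]
  have hTr : T = r ^ p * n := by
    rw [hrp]; field_simp
  set u : ℝ := lam * r with hu
  have hu0 : 0 < u := mul_pos hlam0 hr0
  -- pointwise bound
  have hpt : ∀ j, x j ≤ min (max (x j) 0) u + u ^ (1 - p) * |x j| ^ p := by
    intro j
    have habs : 0 ≤ u ^ (1 - p) * |x j| ^ p :=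
      mul_nonneg (Real.rpow_nonneg hu0.le _) (Real.rpow_nonneg (abs_nonneg _) _)
    rcases le_or_gt (max (x j) 0) u with h | h
    · rw [min_eq_left h]
      have := le_max_left (x j) 0
      linarith
    · rw [min_eq_right h.le]
      have hx0 : 0 < x j := by
        by_contra hcon
        push_neg at hcon
        rw [max_eq_right hcon] at h
        exact absurd h (not_lt.2 hu0.le)
      have hxu : u < x j := by rwa [max_eq_left hx0.le] at h
      have hxabs : |x j| = x j := abs_of_pos hx0
      -- x j ≤ u^(1-p) * (x j)^p
      have hkey : x j ≤ u ^ (1 - p) * |x j| ^ p := by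
        rw [hxabs]
        have h1 : x j ^ p = x j * x j ^ (p - 1) := by
          rw [← Real.rpow_one_add' hx0.le (by linarith : 1 + (p-1) ≠ 0)]
          ring_nf
        have h2 : u ^ (p - 1) ≤ x j ^ (p - 1) :=
          Real.rpow_le_rpow hu0.le hxu.le hp1.le
        have h3 : u ^ (1 - p) = (u ^ (p - 1))⁻¹ := by
          rw [← Real.rpow_neg hu0.le]
          ring_nf
        have hup : 0 < u ^ (p - 1) := Real.rpow_pos_of_pos hu0 _
        rw [h1, h3]
        calc x j = (u ^ (p-1))⁻¹ * (x j * u ^ (p-1)) := by field_simp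
          _ ≤ (u ^ (p-1))⁻¹ * (x j * x j ^ (p-1)) := by
              refine mul_le_mul_of_nonneg_left ?_ (by positivity)
              exact mul_le_mul_of_nonneg_left h2 hx0.le
      linarith
  -- sum bound : S ≤ ∑ min(x⁺, u) + u^(1-p) T
  have hsum : S ≤ (∑ j ∈ Finset.range n, min (max (x j) 0) u) + u ^ (1 - p) * T := by
    calc S ≤ ∑ j ∈ Finset.range n, (min (max (x j) 0) u + u ^ (1 - p) * |x j| ^ p) :=
          Finset.sum_le_sum fun j _ => hpt j
      _ = _ := by rw [Finset.sum_add_distrib, ← Finset.mul_sum, hTdef]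
  -- S ≥ z r n
  have hSz : z * r * n ≤ S := by
    have h1 : T ^ (1/p) = r * (n:ℝ) ^ (1/p) := by
      rw [hTr, Real.mul_rpow (Real.rpow_nonneg hr0.le _) hn0.le, ← Real.rpow_mul hr0.le,
        mul_one_div, div_self hp0.ne', Real.rpow_one]
    have h2 : z * (n:ℝ) ^ (1 - 1/p) * T ^ (1/p) = z * r * n := by
      rw [h1]
      have : (n:ℝ) ^ (1 - 1/p) * (n:ℝ) ^ (1/p) = n := by
        rw [← Real.rpow_add hn0]; norm_num
      calc z * (n:ℝ) ^ (1 - 1/p) * (r * (n:ℝ) ^ (1/p))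
          = z * r * ((n:ℝ) ^ (1 - 1/p) * (n:ℝ) ^ (1/p)) := by ring
        _ = z * r * n := by rw [this]
    linarith [hEv, h2.symm.le]
  -- u^(1-p) T ≤ z/2 r n
  have hlam3 : lam ^ (1 - p) ≤ z / 2 := by
    have h1 : lam ^ (1 - p) = (lam ^ (p - 1))⁻¹ := by
      rw [← Real.rpow_neg hlam0.le]; ring_nf
    rw [h1]
    have h2 : 0 < 2 / z := by positivity
    refine le_trans (inv_anti₀ h2 hlam2) ?_
    rw [inv_div]
  have huT : u ^ (1 - p) * T ≤ z / 2 * r * n := by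
    have h1 : u ^ (1 - p) = lam ^ (1 - p) * r ^ (1 - p) :=
      Real.mul_rpow hlam0.le hr0.le
    have h2 : r ^ (1 - p) * r ^ p = r := by
      rw [← Real.rpow_add hr0]; norm_num
    have h3 : u ^ (1 - p) * T = lam ^ (1 - p) * r * n := by
      rw [h1, hTr]
      calc lam ^ (1-p) * r ^ (1-p) * (r ^ p * n)
          = lam ^ (1-p) * (r ^ (1-p) * r ^ p) * n := by ring
        _ = lam ^ (1-p) * r * n := by rw [h2]
    rw [h3]
    have : lam ^ (1-p) * r ≤ z / 2 * r := mul_le_mul_of_nonneg_right hlam3 hr0.le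
    exact mul_le_mul_of_nonneg_right this hn0.le
  -- ∑ min(x⁺,u) ≥ z/2 r n
  have hmin : z / 2 * r * n ≤ ∑ j ∈ Finset.range n, min (max (x j) 0) u := by
    have := hsum
    nlinarith [hSz, huT]
  -- divide by u
  have hfin : ∀ j, min (max (x j) 0) u / u ≤ min (max (x j) 0 / (lam * b)) 1 := by
    intro j
    have hx0 : 0 ≤ max (x j) 0 := le_max_right _ _
    have hlb0 : 0 < lam * b := mul_pos hlam0 hb
    have h1 : min (max (x j) 0) u / u = min (max (x j) 0 / u) 1 := by
      rw [← min_div_div_right hu0.le, div_self hu0.ne']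
    rw [h1]
    refine min_le_min (div_le_div_of_nonneg_left hx0 hlb0 ?_) le_rfl
    rw [hu]
    exact mul_le_mul_of_nonneg_left hbr hlam0.le
  have h5 : (∑ j ∈ Finset.range n, min (max (x j) 0) u) / u
      ≤ ∑ j ∈ Finset.range n, min (max (x j) 0 / (lam * b)) 1 := by
    rw [Finset.sum_div]
    exact Finset.sum_le_sum fun j _ => hfin j
  have h6 : z / (2 * lam) * n ≤ (∑ j ∈ Finset.range n, min (max (x j) 0) u) / u := by
    have heq : z / 2 * r * n / u = z / (2 * lam) * n := by
      rw [hu]; field_simp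
    calc z / (2 * lam) * n = z / 2 * r * n / u := heq.symm
      _ ≤ _ := (div_le_div_iff_of_pos_right hu0).2 hmin
  linarith

lemma cont_at {Ω : Type*} [MeasurableSpace Ω] (P : Measure Ω) [IsProbabilityMeasure P]
    (X0 : Ω → ℝ) (hX0 : Measurable X0) (p z : ℝ) (hp : 1 < p) (hz : 0 < z)
    (t : ℝ) (ht : 0 ≤ t) (v : ℝ) (hv : 0 ≤ v) (A : ℝ≥0∞)
    (hA : (∫⁻ ω, ENNReal.ofReal (Real.exp (t * G z p (v ^ ((p-1)/p)) (X0 ω))) ∂P) < A) :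
    ∃ ρ : ℝ, 0 < ρ ∧ ρ ≤ 1 ∧ ∀ w : ℝ, 0 ≤ w → |w - v| ≤ ρ →
      (∫⁻ ω, ENNReal.ofReal (Real.exp (t * G z p (w ^ ((p-1)/p)) (X0 ω))) ∂P) < A := by
  have hp0 : (0:ℝ) < p := lt_trans one_pos hp
  have hp1 : (0:ℝ) < p - 1 := by linarith
  by_contra hcon
  push_neg at hcon
  have hstep : ∀ k : ℕ, ∃ w : ℝ, 0 ≤ w ∧ |w - v| ≤ 1/(k+1) ∧
      A ≤ ∫⁻ ω, ENNReal.ofReal (Real.exp (t * G z p (w ^ ((p-1)/p)) (X0 ω))) ∂P := by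
    intro k
    have h1 : (0:ℝ) < 1/(k+1) := by positivity
    have h2 : (1:ℝ)/(k+1) ≤ 1 := by
      rw [div_le_one (by positivity)]
      simp
    obtain ⟨w, hw1, hw2, hw3⟩ := hcon (1/(k+1)) h1 h2
    exact ⟨w, hw1, hw2, hw3⟩
  choose wseq hw0 hw1 hw2 using hstep
  -- wseq → v
  have hwtend : Tendsto wseq atTop (nhds v) := by
    rw [tendsto_iff_dist_tendsto_zero]
    refine squeeze_zero (fun k => dist_nonneg) (fun k => ?_) tendsto_one_div_add_atTop_nhds_zero_nat
    rw [Real.dist_eq]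
    exact hw1 k
  set cv : ℝ := v ^ ((p-1)/p) with hcv
  have hctend : Tendsto (fun k => (wseq k) ^ ((p-1)/p)) atTop (nhds cv) :=
    ((Real.continuousAt_rpow_const v ((p-1)/p) (Or.inr (by positivity))).tendsto).comp hwtend
  -- uniform bound
  have hwle : ∀ k, wseq k ≤ v + 1 := by
    intro k
    have := hw1 k
    have h2 : (1:ℝ)/(k+1) ≤ 1 := by
      rw [div_le_one (by positivity)]; simp
    have := abs_le.1 this
    linarith [this.2]
  set cbar : ℝ := (v + 1) ^ ((p-1)/p) with hcbar
  have hcle : ∀ k, (wseq k) ^ ((p-1)/p) ≤ cbar :=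
    fun k => Real.rpow_le_rpow (hw0 k) (hwle k) (by positivity)
  obtain ⟨M, hM0, hM⟩ := exists_bound z p cbar hz hp (Real.rpow_nonneg (by linarith) _)
  have hGb : ∀ k x, G z p ((wseq k) ^ ((p-1)/p)) x ≤ M :=
    fun k x => G_le z p _ cbar M hz hp (Real.rpow_nonneg (hw0 k) _) (hcle k) hM x
  -- dominated convergence
  set F : ℕ → Ω → ℝ≥0∞ :=
    fun k ω => ENNReal.ofReal (Real.exp (t * G z p ((wseq k) ^ ((p-1)/p)) (X0 ω))) with hF
  set f : Ω → ℝ≥0∞ := fun ω => ENNReal.ofReal (Real.exp (t * G z p cv (X0 ω))) with hf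
  have hFmeas : ∀ k, Measurable (F k) :=
    fun k => ((((G_measurable z p _).comp hX0).const_mul t).exp).ennreal_ofReal
  have hFbound : ∀ k, F k ≤ᵐ[P] fun _ => ENNReal.ofReal (Real.exp (t * M)) := by
    intro k
    refine ae_of_all _ fun ω => ?_
    exact ENNReal.ofReal_le_ofReal (Real.exp_le_exp.2 (mul_le_mul_of_nonneg_left (hGb k _) ht))
  have hptwise : ∀ ω, Tendsto (fun k => F k ω) atTop (nhds (f ω)) := by
    intro ω
    have hGcont : ContinuousAt
        (fun c : ℝ => ENNReal.ofReal (Real.exp (t * G z p c (X0 ω)))) cv := by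
      refine ENNReal.continuous_ofReal.continuousAt.comp ?_
      refine Real.continuous_exp.continuousAt.comp ?_
      refine (continuousAt_const.mul ?_)
      unfold G
      refine ContinuousAt.sub ?_ ?_
      · exact continuousAt_id.mul continuousAt_const
      · refine continuousAt_const.mul (ContinuousAt.add continuousAt_const ?_)
        exact continuousAt_const.mul
          (Real.continuousAt_rpow_const cv (p/(p-1)) (Or.inr (by positivity)))
    exact hGcont.tendsto.comp hctend
  have htendI : Tendsto (fun k => ∫⁻ ω, F k ω ∂P) atTop (nhds (∫⁻ ω, f ω ∂P)) := by
    refine tendsto_lintegral_of_dominated_convergence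
      (fun _ => ENNReal.ofReal (Real.exp (t * M))) hFmeas hFbound ?_ ?_
    · simp
    · exact ae_of_all _ hptwise
  have : A ≤ ∫⁻ ω, f ω ∂P := ge_of_tendsto htendI (Filter.Eventually.of_forall (fun k => hw2 k))
  exact absurd this hA.not_ge


lemma lintegral_ofReal_exp {Ω : Type*} [MeasurableSpace Ω] (P : Measure Ω)
    [IsProbabilityMeasure P] (Y : Ω → ℝ) (hY : Measurable Y) (C : ℝ) (hC : ∀ ω, Y ω ≤ C) :
    ∫⁻ ω, ENNReal.ofReal (Real.exp (Y ω)) ∂P = ENNReal.ofReal (∫ ω, Real.exp (Y ω) ∂P) :=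
  (ofReal_integral_eq_lintegral_ofReal (exp_integrable P Y hY C hC)
    (ae_of_all _ fun ω => (Real.exp_pos _).le)).symm

lemma trunc_mean_tendsto {Ω : Type*} [MeasurableSpace Ω] (P : Measure Ω)
    [IsProbabilityMeasure P] (X0 : Ω → ℝ) (hX0 : Measurable X0) :
    Tendsto (fun k : ℕ => ∫ ω, min (max (X0 ω) 0 / ((k:ℝ)+1)) 1 ∂P) atTop (nhds 0) := by
  have hmain : Tendsto (fun k : ℕ => ∫ ω, min (max (X0 ω) 0 / ((k:ℝ)+1)) 1 ∂P) atTop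
      (nhds (∫ _ω, (0:ℝ) ∂P)) := by
    refine tendsto_integral_of_dominated_convergence (fun _ => (1:ℝ)) ?_ (integrable_const 1)
          ?_ ?_
    · intro k
      exact (((hX0.max measurable_const).div_const _).min measurable_const).aestronglyMeasurable
    · intro k
      refine ae_of_all _ fun ω => ?_
      rw [Real.norm_eq_abs, abs_le]
      constructor
      · have : (0:ℝ) ≤ min (max (X0 ω) 0 / ((k:ℝ)+1)) 1 :=
          le_min (by positivity) one_pos.le
        linarith
      · exact min_le_right _ _
    · refine ae_of_all _ fun ω => ?_
      have h1 : Tendsto (fun k : ℕ => max (X0 ω) 0 / ((k:ℝ)+1)) atTop (nhds 0) := by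
        have := tendsto_one_div_add_atTop_nhds_zero_nat.const_mul (max (X0 ω) 0)
        rw [mul_zero] at this
        refine this.congr fun k => ?_
        field_simp
      exact squeeze_zero (fun k => le_min (by positivity) one_pos.le)
        (fun k => min_le_left _ _) h1
  simpa using hmain

lemma exp_min_le (s w : ℝ) (hs : 0 ≤ s) (h0 : 0 ≤ w) (h1 : w ≤ 1) :
    Real.exp (s * w) ≤ 1 + w * (Real.exp s - 1) := by
  have := convexOn_exp.2 (Set.mem_univ (0:ℝ)) (Set.mem_univ s) (by linarith : (0:ℝ) ≤ 1 - w)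
    h0 (by ring : 1 - w + w = 1)
  simp only [smul_eq_mul, mul_zero, Real.exp_zero, mul_one, zero_add] at this
  calc Real.exp (s * w) = Real.exp (w * s) := by rw [mul_comm]
    _ ≤ (1 - w) * 1 + w * Real.exp s := by simpa using this
    _ = 1 + w * (Real.exp s - 1) := by ring


end SelfNormAux

set_option maxHeartbeats 1000000 in
/-- **Upper large-deviation bound for self-normalized sums.**
Let `p > 1` and `P(X > 0) > 0`. Then for every `z > 0` with `z > z*`:
`limsup_{n→∞} n⁻¹ · ln P(Aₙ(z)) ≤ J_z` in the extended real line. -/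
theorem self_normalized_LD_upper_bound
    {Ω : Type*} [MeasurableSpace Ω] (P : Measure Ω) [IsProbabilityMeasure P]
    (X : ℕ → Ω → ℝ) (hmeas : ∀ i, Measurable (X i))
    (hindep : iIndepFun X P)
    (hident : ∀ i, IdentDistrib (X i) (X 0) P P)
    (hpos : 0 < P {ω | 0 < X 0 ω})
    (p : ℝ) (hp : 1 < p)
    (z : ℝ) (hz0 : 0 < z)
    (hz : (if Integrable (fun ω => |X 0 ω| ^ p) P
        then (∫ ω, X 0 ω ∂P) * (∫ ω, |X 0 ω| ^ p ∂P) ^ (-(1 / p)) else 0) < z) :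
    Filter.limsup
        (fun n : ℕ =>
          (((n : ℝ)⁻¹ : ℝ) : EReal) *
            ENNReal.log
              (P {ω | z * (n : ℝ) ^ (1 - 1 / p) *
                    (∑ j ∈ Finset.range n, |X j ω| ^ p) ^ (1 / p)
                  ≤ ∑ j ∈ Finset.range n, X j ω}))
        atTop
      ≤ (⨆ c : {c : ℝ // 0 ≤ c}, ⨅ t : {t : ℝ // 0 ≤ t},
          ENNReal.log (∫⁻ ω, ENNReal.ofReal
            (Real.exp ((t : ℝ) * ((c : ℝ) * X 0 ω -
              z / p * (|X 0 ω| ^ p + (p - 1) * (c : ℝ) ^ (p / (p - 1)))))) ∂P)) := by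
  classical
  have hp0 : (0:ℝ) < p := lt_trans one_pos hp
  have hp1 : (0:ℝ) < p - 1 := by linarith
  set J : EReal := (⨆ c : {c : ℝ // 0 ≤ c}, ⨅ t : {t : ℝ // 0 ≤ t},
      ENNReal.log (∫⁻ ω, ENNReal.ofReal
        (Real.exp ((t : ℝ) * ((c : ℝ) * X 0 ω -
          z / p * (|X 0 ω| ^ p + (p - 1) * (c : ℝ) ^ (p / (p - 1)))))) ∂P)) with hJ
  set LS : EReal := Filter.limsup
      (fun n : ℕ =>
        (((n : ℝ)⁻¹ : ℝ) : EReal) *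
          ENNReal.log
            (P {ω | z * (n : ℝ) ^ (1 - 1 / p) *
                  (∑ j ∈ Finset.range n, |X j ω| ^ p) ^ (1 / p)
                ≤ ∑ j ∈ Finset.range n, X j ω}))
      atTop with hLS
  suffices key : ∀ L0 : ℝ, J < (L0 : EReal) → LS ≤ (L0 : EReal) by
    by_contra hcon
    push_neg at hcon
    obtain ⟨L0, h1, h2⟩ := EReal.exists_between_coe_real hcon
    exact absurd (key L0 h1) (not_le.2 h2)
  intro L0 hL0
  obtain ⟨L1', hJL1, hL1L0⟩ := EReal.exists_between_coe_real hL0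
  set L1 : ℝ := L1' with hL1def
  have hL1L0' : L1 < L0 := by exact_mod_cast hL1L0
  set ε : ℝ := (L0 - L1) / 2 with hεdef
  have hε0 : 0 < ε := by rw [hεdef]; linarith
  set L2 : ℝ := L1 + ε with hL2
  have hL2L0 : L2 + ε = L0 := by rw [hL2, hεdef]; ring
  -- Step A : for each grid value v, a good tilt parameter t
  have hIneed : ∀ v : ℝ, 0 ≤ v → ∃ t : ℝ, 0 ≤ t ∧
      (∫⁻ ω, ENNReal.ofReal (Real.exp (t * SelfNormAux.G z p (v ^ ((p-1)/p)) (X 0 ω))) ∂P)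
        < ENNReal.ofReal (Real.exp L1) := by
    intro v hv
    have hc : 0 ≤ v ^ ((p-1)/p) := Real.rpow_nonneg hv _
    have h1 : (⨅ t : {t : ℝ // 0 ≤ t},
        ENNReal.log (∫⁻ ω, ENNReal.ofReal
          (Real.exp ((t : ℝ) * ((v ^ ((p-1)/p)) * X 0 ω -
            z / p * (|X 0 ω| ^ p + (p - 1) * (v ^ ((p-1)/p)) ^ (p / (p - 1)))))) ∂P)) ≤ J := by
      rw [hJ]
      exact le_iSup (fun c : {c : ℝ // 0 ≤ c} => ⨅ t : {t : ℝ // 0 ≤ t},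
        ENNReal.log (∫⁻ ω, ENNReal.ofReal
          (Real.exp ((t : ℝ) * ((c : ℝ) * X 0 ω -
            z / p * (|X 0 ω| ^ p + (p - 1) * (c : ℝ) ^ (p / (p - 1)))))) ∂P))
        (⟨v ^ ((p-1)/p), hc⟩ : {c : ℝ // 0 ≤ c})
    have h2 := lt_of_le_of_lt h1 hJL1
    rw [iInf_lt_iff] at h2
    obtain ⟨⟨t, ht⟩, hti⟩ := h2
    refine ⟨t, ht, ?_⟩
    have hL1log : (L1 : EReal) = ENNReal.log (ENNReal.ofReal (Real.exp L1)) := by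
      rw [ENNReal.log_ofReal_of_pos (Real.exp_pos _), Real.log_exp]
    rw [hL1def] at hL1log
    rw [hL1log] at hti
    exact ENNReal.log_lt_log_iff.1 hti
  -- Step B : tail parameters
  set lam : ℝ := max ((2/z) ^ (1/(p-1))) 1 with hlam
  have hlam1 : (1:ℝ) ≤ lam := le_max_right _ _
  have hlam0 : (0:ℝ) < lam := lt_of_lt_of_le one_pos hlam1
  have hlam2 : 2 / z ≤ lam ^ (p - 1) := by
    have h0 : (0:ℝ) ≤ 2 / z := by positivity
    have h1 : ((2/z) ^ (1/(p-1))) ^ (p-1) = 2/z := by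
      rw [← Real.rpow_mul h0, one_div, inv_mul_cancel₀ (by linarith : p - 1 ≠ 0),
        Real.rpow_one]
    calc 2/z = ((2/z) ^ (1/(p-1))) ^ (p-1) := h1.symm
      _ ≤ lam ^ (p-1) := Real.rpow_le_rpow (Real.rpow_nonneg h0 _) (le_max_left _ _)
          (by linarith)
  set β : ℝ := z / (2 * lam) with hβ
  have hβ0 : 0 < β := by rw [hβ]; positivity
  set s : ℝ := max ((1 - L1)/β) 0 with hs
  have hs0 : 0 ≤ s := le_max_right _ _
  have hsβ : 1 - L1 ≤ s * β := by
    have h1 : (1 - L1)/β ≤ s := le_max_left _ _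
    calc 1 - L1 = (1 - L1)/β * β := by field_simp
      _ ≤ s * β := mul_le_mul_of_nonneg_right h1 hβ0.le
  obtain ⟨k0, hk0⟩ : ∃ k0 : ℕ, ∫ ω, min (max (X 0 ω) 0 / ((k0:ℝ)+1)) 1 ∂P < Real.exp (-s) :=
    ((SelfNormAux.trunc_mean_tendsto P (X 0) (hmeas 0)).eventually_lt_const
      (Real.exp_pos (-s))).exists
  set u0 : ℝ := (k0:ℝ) + 1 with hu0
  have hu00 : 0 < u0 := by positivity
  set b : ℝ := u0 / lam with hbdef
  have hb0 : 0 < b := by positivity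
  have hlamb : lam * b = u0 := by rw [hbdef]; field_simp
  set B : ℝ := b ^ p with hB
  have hB0 : 0 < B := Real.rpow_pos_of_pos hb0 _
  set W : ℝ → ℝ := fun x => min (max x 0 / u0) 1 with hWdef
  have hWmeas : Measurable W :=
    ((measurable_id.max measurable_const).div_const _).min measurable_const
  have hW01 : ∀ x : ℝ, 0 ≤ W x ∧ W x ≤ 1 := fun x =>
    ⟨le_min (by positivity) one_pos.le, min_le_right _ _⟩
  have hm0 : 0 ≤ ∫ ω, W (X 0 ω) ∂P := integral_nonneg fun ω => (hW01 _).1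
  have hk0' : ∫ ω, W (X 0 ω) ∂P < Real.exp (-s) := hk0
  have hmgfW : ∫ ω, Real.exp (s * W (X 0 ω)) ∂P ≤ Real.exp 1 := by
    have hWint : Integrable (fun ω => W (X 0 ω)) P := by
      refine (integrable_const (1:ℝ)).mono'
        ((hWmeas.comp (hmeas 0)).aestronglyMeasurable) ?_
      exact ae_of_all _ fun ω => by
        rw [Real.norm_eq_abs, abs_of_nonneg (hW01 _).1]; exact (hW01 _).2
    have h1 : ∫ ω, Real.exp (s * W (X 0 ω)) ∂P
        ≤ ∫ ω, (1 + W (X 0 ω) * (Real.exp s - 1)) ∂P := by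
      refine integral_mono ?_ ?_ ?_
      · exact SelfNormAux.exp_integrable P _ ((hWmeas.comp (hmeas 0)).const_mul s) s
          (fun ω => by nlinarith [(hW01 (X 0 ω)).2, (hW01 (X 0 ω)).1])
      · exact (integrable_const 1).add (hWint.mul_const _)
      · exact fun ω => SelfNormAux.exp_min_le s _ hs0 (hW01 _).1 (hW01 _).2
    have h2 : ∫ ω, (1 + W (X 0 ω) * (Real.exp s - 1)) ∂P
        = 1 + (∫ ω, W (X 0 ω) ∂P) * (Real.exp s - 1) := by
      rw [integral_add (integrable_const 1) (hWint.mul_const _), integral_const,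
        integral_mul_const]
      simp
    have hexp1 : (1:ℝ) ≤ Real.exp s := Real.one_le_exp hs0
    have h4 : Real.exp (-s) * Real.exp s = 1 := by rw [← Real.exp_add]; simp
    have h3 : (∫ ω, W (X 0 ω) ∂P) * (Real.exp s - 1) ≤ 1 := by
      have h5 : (∫ ω, W (X 0 ω) ∂P) * (Real.exp s - 1)
          ≤ Real.exp (-s) * (Real.exp s - 1) :=
        mul_le_mul_of_nonneg_right hk0'.le (by linarith)
      nlinarith [Real.exp_pos (-s)]
    have h6 : (2:ℝ) ≤ Real.exp 1 := by
      have := Real.add_one_le_exp (1:ℝ); linarith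
    linarith
  -- tail Chernoff bound
  have htail : ∀ n : ℕ, P {ω | β * n ≤ ∑ j ∈ Finset.range n, W (X j ω)}
      ≤ ENNReal.ofReal (Real.exp (L1 * n)) := by
    intro n
    have hch := SelfNormAux.chernoff P X hmeas hindep hident W hWmeas 1
      (fun x => (hW01 x).2) s hs0 β n
    refine le_trans hch (ENNReal.ofReal_le_ofReal ?_)
    have hnn : (0:ℝ) ≤ n := Nat.cast_nonneg n
    have hmgf0 : 0 ≤ ∫ ω, Real.exp (s * W (X 0 ω)) ∂P :=
      integral_nonneg fun ω => (Real.exp_pos _).le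
    have h1 : (∫ ω, Real.exp (s * W (X 0 ω)) ∂P) ^ n ≤ (Real.exp 1) ^ n :=
      pow_le_pow_left₀ hmgf0 hmgfW n
    have h2 : Real.exp (-s * (β * n)) * (∫ ω, Real.exp (s * W (X 0 ω)) ∂P) ^ n
        ≤ Real.exp (-s * (β * n)) * (Real.exp 1) ^ n :=
      mul_le_mul_of_nonneg_left h1 (Real.exp_pos _).le
    have h3 : Real.exp (-s * (β * n)) * (Real.exp 1) ^ n = Real.exp ((1 - s*β) * n) := by
      rw [← Real.exp_nat_mul, ← Real.exp_add]
      congr 1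
      ring
    have h4 : Real.exp ((1 - s*β) * n) ≤ Real.exp (L1 * n) :=
      Real.exp_le_exp.2 (mul_le_mul_of_nonneg_right (by linarith) hnn)
    linarith
  -- Step C : good radii around each grid point
  have hpoint : ∀ v : ℝ, 0 ≤ v → ∃ ρ t : ℝ, 0 < ρ ∧ ρ ≤ 1 ∧ 0 ≤ t ∧
      t * (z * (2*ρ)/p) ≤ ε ∧
      ∀ w : ℝ, 0 ≤ w → |w - v| ≤ ρ →
        (∫⁻ ω, ENNReal.ofReal
          (Real.exp (t * SelfNormAux.G z p (w ^ ((p-1)/p)) (X 0 ω))) ∂P)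
          < ENNReal.ofReal (Real.exp L1) := by
    intro v hv
    obtain ⟨t, ht0, htI⟩ := hIneed v hv
    obtain ⟨ρ1, hρ1, hρ11, hρI⟩ :=
      SelfNormAux.cont_at P (X 0) (hmeas 0) p z hp hz0 t ht0 v hv _ htI
    have ht1 : (0:ℝ) < t + 1 := by linarith
    set ρ2 : ℝ := ε * p / (2 * z * (t + 1)) with hρ2
    have hρ20 : 0 < ρ2 := by rw [hρ2]; positivity
    refine ⟨min ρ1 ρ2, t, lt_min hρ1 hρ20, le_trans (min_le_left _ _) hρ11, ht0, ?_, ?_⟩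
    · have key2 : t * (z * (2 * ρ2) / p) ≤ ε := by
        have he : z * (2 * ρ2) / p = ε / (t+1) := by
          rw [hρ2]; field_simp
        rw [he, mul_div_assoc']
        rw [div_le_iff₀ ht1]
        nlinarith
      have hmono : t * (z * (2 * min ρ1 ρ2) / p) ≤ t * (z * (2 * ρ2) / p) := by
        have h1 : min ρ1 ρ2 ≤ ρ2 := min_le_right _ _
        have h2 : z * (2 * min ρ1 ρ2) ≤ z * (2 * ρ2) := by nlinarith
        exact mul_le_mul_of_nonneg_left ((div_le_div_iff_of_pos_right hp0).2 h2) ht0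
      linarith
    · intro w hw hwv
      exact hρI w hw (le_trans hwv (min_le_left _ _))
  choose! ρf tf hρ0 hρle1 ht0' htε' hIb using hpoint
  -- finite subcover of [0, B]
  have hcov : Icc (0:ℝ) B ⊆
      ⋃ v : ℝ, Ioo (max v 0 - ρf (max v 0)) (max v 0 + ρf (max v 0)) := by
    intro y hy
    refine mem_iUnion.2 ⟨y, ?_⟩
    have hy0 : max y 0 = y := max_eq_left hy.1
    rw [hy0]
    have := hρ0 y hy.1
    exact ⟨by linarith, by linarith⟩
  obtain ⟨S, hS⟩ := isCompact_Icc.elim_finite_subcover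
    (fun v : ℝ => Ioo (max v 0 - ρf (max v 0)) (max v 0 + ρf (max v 0)))
    (fun v => isOpen_Ioo) hcov
  -- grid piece Chernoff bound
  have hgrid : ∀ i : ℝ, ∀ n : ℕ,
      P {ω | (-(z * ((max i 0 + ρf (max i 0)) - max (max i 0 - ρf (max i 0)) 0)/p)) * n
          ≤ ∑ j ∈ Finset.range n,
              SelfNormAux.G z p ((max (max i 0 - ρf (max i 0)) 0) ^ ((p-1)/p)) (X j ω)}
        ≤ ENNReal.ofReal (Real.exp (L2 * n)) := by
    intro i n
    set vi : ℝ := max i 0 with hvi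
    have hvi0 : (0:ℝ) ≤ vi := le_max_right _ _
    have hρpos := hρ0 vi hvi0
    have ht0 := ht0' vi hvi0
    have htε := htε' vi hvi0
    set wi : ℝ := max (vi - ρf vi) 0 with hwi
    have hwi0 : (0:ℝ) ≤ wi := le_max_right _ _
    have hwv : |wi - vi| ≤ ρf vi := by
      rcases le_or_gt 0 (vi - ρf vi) with h | h
      · rw [hwi, max_eq_left h, show vi - ρf vi - vi = -(ρf vi) by ring, abs_neg,
          abs_of_nonneg hρpos.le]
      · rw [hwi, max_eq_right h.le, zero_sub, abs_neg, abs_of_nonneg hvi0]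
        linarith
    have hI := hIb vi hvi0 wi hwi0 hwv
    set ci : ℝ := wi ^ ((p-1)/p) with hci
    have hci0 : 0 ≤ ci := Real.rpow_nonneg hwi0 _
    obtain ⟨M, hM0, hM⟩ := SelfNormAux.exists_bound z p ci hz0 hp hci0
    have hGM : ∀ x, SelfNormAux.G z p ci x ≤ M :=
      SelfNormAux.G_le z p ci ci M hz0 hp hci0 le_rfl hM
    have hch := SelfNormAux.chernoff P X hmeas hindep hident (SelfNormAux.G z p ci)
      (SelfNormAux.G_measurable z p ci) M hGM (tf vi) ht0
      (-(z * ((vi + ρf vi) - wi)/p)) n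
    refine le_trans hch (ENNReal.ofReal_le_ofReal ?_)
    have heq := SelfNormAux.lintegral_ofReal_exp P
      (fun ω => tf vi * SelfNormAux.G z p ci (X 0 ω))
      (((SelfNormAux.G_measurable z p ci).comp (hmeas 0)).const_mul (tf vi)) (tf vi * M)
      (fun ω => mul_le_mul_of_nonneg_left (hGM _) ht0)
    rw [heq] at hI
    have hintrep : ∫ ω, Real.exp (tf vi * SelfNormAux.G z p ci (X 0 ω)) ∂P ≤ Real.exp L1 :=
      ((ENNReal.ofReal_lt_ofReal_iff (Real.exp_pos _)).1 hI).le
    have hintnn : 0 ≤ ∫ ω, Real.exp (tf vi * SelfNormAux.G z p ci (X 0 ω)) ∂P :=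
      integral_nonneg fun ω => (Real.exp_pos _).le
    have h1 : (∫ ω, Real.exp (tf vi * SelfNormAux.G z p ci (X 0 ω)) ∂P) ^ n
        ≤ Real.exp L1 ^ n := pow_le_pow_left₀ hintnn hintrep n
    have hnn : (0:ℝ) ≤ n := Nat.cast_nonneg n
    have hgap : (vi + ρf vi) - wi ≤ 2 * ρf vi := by
      have : vi - ρf vi ≤ wi := le_max_left _ _
      linarith
    have h2 : Real.exp (-(tf vi) * (-(z * ((vi + ρf vi) - wi)/p) * n))
        ≤ Real.exp (ε * n) := by
      refine Real.exp_le_exp.2 ?_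
      have e1 : -(tf vi) * (-(z * ((vi + ρf vi) - wi)/p) * n)
          = tf vi * (z * ((vi + ρf vi) - wi)/p) * n := by ring
      rw [e1]
      have e2 : tf vi * (z * ((vi + ρf vi) - wi)/p) ≤ tf vi * (z * (2 * ρf vi)/p) := by
        refine mul_le_mul_of_nonneg_left ((div_le_div_iff_of_pos_right hp0).2 ?_) ht0
        nlinarith
      have e3 : tf vi * (z * (2 * ρf vi)/p) * n ≤ ε * n :=
        mul_le_mul_of_nonneg_right htε hnn
      have e4 : tf vi * (z * ((vi + ρf vi) - wi)/p) * n
          ≤ tf vi * (z * (2 * ρf vi)/p) * n :=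
        mul_le_mul_of_nonneg_right e2 hnn
      linarith
    calc Real.exp (-(tf vi) * (-(z * ((vi + ρf vi) - wi)/p) * n)) *
          (∫ ω, Real.exp (tf vi * SelfNormAux.G z p ci (X 0 ω)) ∂P) ^ n
        ≤ Real.exp (ε * n) * Real.exp L1 ^ n :=
          mul_le_mul h2 h1 (pow_nonneg hintnn n) (Real.exp_pos _).le
      _ = Real.exp (L2 * n) := by
          rw [← Real.exp_nat_mul, ← Real.exp_add]
          congr 1
          rw [hL2]; ring
  -- full probability bound
  have hPbound : ∀ n : ℕ, 1 ≤ n →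
      P {ω | z * (n : ℝ) ^ (1 - 1 / p) *
            (∑ j ∈ Finset.range n, |X j ω| ^ p) ^ (1 / p)
          ≤ ∑ j ∈ Finset.range n, X j ω}
        ≤ (S.card + 1 : ℝ≥0∞) * ENNReal.ofReal (Real.exp (L2 * n)) := by
    intro n hn
    have hn0 : (0:ℝ) < n := by exact_mod_cast hn
    have hincl : {ω | z * (n : ℝ) ^ (1 - 1 / p) *
            (∑ j ∈ Finset.range n, |X j ω| ^ p) ^ (1 / p)
          ≤ ∑ j ∈ Finset.range n, X j ω}
        ⊆ (⋃ i ∈ S, {ω | (-(z * ((max i 0 + ρf (max i 0))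
              - max (max i 0 - ρf (max i 0)) 0)/p)) * n
            ≤ ∑ j ∈ Finset.range n,
                SelfNormAux.G z p ((max (max i 0 - ρf (max i 0)) 0) ^ ((p-1)/p)) (X j ω)})
          ∪ {ω | β * n ≤ ∑ j ∈ Finset.range n, W (X j ω)} := by
      intro ω hω
      have hω' : z * (n : ℝ) ^ (1 - 1/p) * (∑ j ∈ Finset.range n, |X j ω| ^ p) ^ (1/p)
          ≤ ∑ j ∈ Finset.range n, X j ω := hω
      have hT0 : 0 ≤ ∑ j ∈ Finset.range n, |X j ω| ^ p :=
        Finset.sum_nonneg fun j _ => Real.rpow_nonneg (abs_nonneg _) _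
      rcases le_or_gt (∑ j ∈ Finset.range n, |X j ω| ^ p) (B * n) with hTB | hTB
      · left
        have hmem : (∑ j ∈ Finset.range n, |X j ω| ^ p) / n ∈ Icc (0:ℝ) B :=
          ⟨by positivity, (div_le_iff₀ hn0).2 (by linarith)⟩
        obtain ⟨i, hiS, hiI⟩ := mem_iUnion₂.1 (hS hmem)
        refine mem_biUnion hiS ?_
        have hwi0 : (0:ℝ) ≤ max (max i 0 - ρf (max i 0)) 0 := le_max_right _ _
        have h1 : max (max i 0 - ρf (max i 0)) 0 ≤ (∑ j ∈ Finset.range n, |X j ω| ^ p) / n :=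
          max_le hiI.1.le (by positivity)
        have h2 : (∑ j ∈ Finset.range n, |X j ω| ^ p) / n ≤ max i 0 + ρf (max i 0) :=
          hiI.2.le
        have h1' : max (max i 0 - ρf (max i 0)) 0 * n ≤ ∑ j ∈ Finset.range n, |X j ω| ^ p := by
          calc max (max i 0 - ρf (max i 0)) 0 * n
              ≤ (∑ j ∈ Finset.range n, |X j ω| ^ p) / n * n :=
                mul_le_mul_of_nonneg_right h1 hn0.le
            _ = ∑ j ∈ Finset.range n, |X j ω| ^ p := by field_simp
        have h2' : (∑ j ∈ Finset.range n, |X j ω| ^ p) ≤ (max i 0 + ρf (max i 0)) * n := by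
          calc (∑ j ∈ Finset.range n, |X j ω| ^ p)
              = (∑ j ∈ Finset.range n, |X j ω| ^ p) / n * n := by field_simp
            _ ≤ (max i 0 + ρf (max i 0)) * n := mul_le_mul_of_nonneg_right h2 hn0.le
        exact SelfNormAux.grid_sum_bound p z hp hz0 n hn (fun j => X j ω)
          (max (max i 0 - ρf (max i 0)) 0) (max i 0 + ρf (max i 0)) hwi0 hω' h1' h2'
      · right
        have hbT : b ^ p * n ≤ ∑ j ∈ Finset.range n, |X j ω| ^ p := by
          rw [← hB]; linarith
        have htb := SelfNormAux.tail_sum_bound p z hp hz0 lam hlam1 hlam2 b hb0 n hn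
          (fun j => X j ω) hω' hbT
        rw [hlamb] at htb
        exact htb
    refine le_trans (measure_mono hincl) ?_
    refine le_trans (measure_union_le _ _) ?_
    refine le_trans (add_le_add (measure_biUnion_finset_le _ _) le_rfl) ?_
    refine le_trans (add_le_add (Finset.sum_le_sum fun i _ => hgrid i n)
      (le_trans (htail n) (ENNReal.ofReal_le_ofReal (Real.exp_le_exp.2
        (mul_le_mul_of_nonneg_right (show L1 ≤ L2 by rw [hL2]; linarith) (Nat.cast_nonneg n)))))) ?_
    refine le_of_eq ?_
    rw [Finset.sum_const, nsmul_eq_mul]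
    ring
  -- conclusion via limsup
  have hcard : ∀ᶠ n : ℕ in atTop, ((S.card : ℝ) + 1) ≤ Real.exp (ε * n) := by
    have h1 : Tendsto (fun n : ℕ => Real.exp (ε * n)) atTop atTop := by
      refine Real.tendsto_exp_atTop.comp ?_
      exact Tendsto.const_mul_atTop hε0 tendsto_natCast_atTop_atTop
    exact h1.eventually_ge_atTop _
  have hev : ∀ᶠ n : ℕ in atTop,
      (((n : ℝ)⁻¹ : ℝ) : EReal) *
        ENNReal.log
          (P {ω | z * (n : ℝ) ^ (1 - 1 / p) *
                (∑ j ∈ Finset.range n, |X j ω| ^ p) ^ (1 / p)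
              ≤ ∑ j ∈ Finset.range n, X j ω}) ≤ (L0 : EReal) := by
    filter_upwards [hcard, eventually_ge_atTop 1] with n hc hn
    have hn0 : (0:ℝ) < n := by exact_mod_cast hn
    have hP : P {ω | z * (n : ℝ) ^ (1 - 1 / p) *
            (∑ j ∈ Finset.range n, |X j ω| ^ p) ^ (1 / p)
          ≤ ∑ j ∈ Finset.range n, X j ω} ≤ ENNReal.ofReal (Real.exp (L0 * n)) := by
      refine le_trans (hPbound n hn) ?_
      have hcast : (S.card + 1 : ℝ≥0∞) = ENNReal.ofReal ((S.card : ℝ) + 1) := by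
        rw [ENNReal.ofReal_add (Nat.cast_nonneg _) zero_le_one]
        simp
      rw [hcast, ← ENNReal.ofReal_mul (add_nonneg (Nat.cast_nonneg _) zero_le_one)]
      refine ENNReal.ofReal_le_ofReal ?_
      calc ((S.card : ℝ) + 1) * Real.exp (L2 * n)
          ≤ Real.exp (ε * n) * Real.exp (L2 * n) :=
            mul_le_mul_of_nonneg_right hc (Real.exp_pos _).le
        _ = Real.exp (L0 * n) := by
            rw [← Real.exp_add]
            congr 1
            have hεL : ε + L2 = L0 := by linarith
            rw [← add_mul, hεL]
    have hlog : ENNReal.log (P {ω | z * (n : ℝ) ^ (1 - 1 / p) *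
            (∑ j ∈ Finset.range n, |X j ω| ^ p) ^ (1 / p)
          ≤ ∑ j ∈ Finset.range n, X j ω}) ≤ ((L0 * n : ℝ) : EReal) := by
      refine le_trans (ENNReal.log_monotone hP) ?_
      rw [ENNReal.log_ofReal_of_pos (Real.exp_pos _), Real.log_exp]
    calc (((n : ℝ)⁻¹ : ℝ) : EReal) *
        ENNReal.log (P {ω | z * (n : ℝ) ^ (1 - 1 / p) *
              (∑ j ∈ Finset.range n, |X j ω| ^ p) ^ (1 / p)
            ≤ ∑ j ∈ Finset.range n, X j ω})
        ≤ (((n : ℝ)⁻¹ : ℝ) : EReal) * ((L0 * n : ℝ) : EReal) := by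
          refine mul_le_mul_of_nonneg_left hlog ?_
          have : (0:ℝ) ≤ (n:ℝ)⁻¹ := by positivity
          exact_mod_cast EReal.coe_nonneg.2 this
      _ = (L0 : EReal) := by
          rw [← EReal.coe_mul]
          congr 1
          field_simp
  rw [hLS]
  exact Filter.limsup_le_of_le (by isBoundedDefault) hev
end

section
/- (Lemma 1) Let p > 1 and let X be a real random variable with P(X > 0) > 0 whose law is not concentrated on at most two points (so that the law of (X,|X|^p) is not supported on an affine line in ℝ²). Then for every z with max(z*, 0) < z < 1: inf_{α ∈ B_z} Λ(α) = inf_{α ∈ B̃_z} Λ(α) < ∞. -/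
open MeasureTheory ProbabilityTheory Real Filter Set
open scoped ENNReal Classical

/-- The cumulant function `A(λ) = ln E exp(λ₁ X + λ₂ |X|^p)` of the vector `(X, |X|^p)`,
with values in the extended reals. -/
noncomputable def selfNormCumulant {Ω : Type*} [MeasurableSpace Ω] (P : Measure Ω)
    (X : Ω → ℝ) (p : ℝ) (l : ℝ × ℝ) : EReal :=
  ENNReal.log (∫⁻ ω, ENNReal.ofReal (Real.exp (l.1 * X ω + l.2 * |X ω| ^ p)) ∂P)

/-- The rate function `Λ(α) = sup_λ (⟨α, λ⟩ − A(λ))` of the vector `(X, |X|^p)`. -/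
noncomputable def selfNormRate {Ω : Type*} [MeasurableSpace Ω] (P : Measure Ω)
    (X : Ω → ℝ) (p : ℝ) (α : ℝ × ℝ) : EReal :=
  ⨆ l : ℝ × ℝ, (((α.1 * l.1 + α.2 * l.2 : ℝ) : EReal) - selfNormCumulant P X p l)

section Aux

variable {Ω : Type*} [MeasurableSpace Ω] {P : Measure Ω} {X : Ω → ℝ} {p : ℝ}

lemma lintegral_ofReal_eq_top_of_not_integrable {f : Ω → ℝ}
    (hf : AEStronglyMeasurable f P) (h0 : 0 ≤ f) (hni : ¬ Integrable f P) :
    ∫⁻ ω, ENNReal.ofReal (f ω) ∂P = ⊤ := by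
  by_contra h
  exact hni ⟨hf, (hasFiniteIntegral_iff_ofReal (Eventually.of_forall h0)).2
    (lt_top_iff_ne_top.2 h)⟩

lemma jensen_exp (Q : Measure Ω) [IsProbabilityMeasure Q] {g : Ω → ℝ}
    (hg : Integrable g Q) :
    ENNReal.ofReal (Real.exp (∫ ω, g ω ∂Q)) ≤ ∫⁻ ω, ENNReal.ofReal (Real.exp (g ω)) ∂Q := by
  by_cases hei : Integrable (fun ω => Real.exp (g ω)) Q
  · rw [← ofReal_integral_eq_lintegral_ofReal hei
      (Eventually.of_forall fun ω => (Real.exp_pos _).le)]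
    refine ENNReal.ofReal_le_ofReal ?_
    exact convexOn_exp.map_integral_le continuous_exp.continuousOn isClosed_univ
      (Eventually.of_forall fun _ => mem_univ _) hg hei
  · rw [lintegral_ofReal_eq_top_of_not_integrable
      (Real.continuous_exp.comp_aestronglyMeasurable hg.1)
      (fun ω => (Real.exp_pos _).le) hei]
    exact le_top

lemma measurable_g (hmeas : Measurable X) (hp : 0 ≤ p) (l : ℝ × ℝ) :
    Measurable fun ω => l.1 * X ω + l.2 * |X ω| ^ p :=
  (hmeas.const_mul l.1).add
    (((Real.continuous_rpow_const hp).measurable.comp hmeas.abs).const_mul l.2)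


lemma cumulant_ne_bot [IsProbabilityMeasure P] (hmeas : Measurable X) (hp : 0 ≤ p)
    (l : ℝ × ℝ) : selfNormCumulant P X p l ≠ ⊥ := by
  rw [selfNormCumulant, Ne, ENNReal.log_eq_bot_iff]
  intro h
  have hpos : 0 < ∫⁻ ω, ENNReal.ofReal (Real.exp (l.1 * X ω + l.2 * |X ω| ^ p)) ∂P := by
    rw [lintegral_pos_iff_support ((measurable_g hmeas hp l).exp.ennreal_ofReal)]
    have : (Function.support fun ω => ENNReal.ofReal
        (Real.exp (l.1 * X ω + l.2 * |X ω| ^ p))) = Set.univ := by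
      ext ω
      simp [Function.mem_support, ENNReal.ofReal_eq_zero, not_le, Real.exp_pos]
    rw [this]
    simp
  exact hpos.ne' h

lemma rate_nonneg [IsProbabilityMeasure P] (α : ℝ × ℝ) :
    (0 : EReal) ≤ selfNormRate P X p α := by
  have h0 : selfNormCumulant P X p (0, 0) = 0 := by
    simp [selfNormCumulant]
  refine le_trans ?_ (le_iSup _ ((0 : ℝ), (0 : ℝ)))
  rw [h0]
  simp

/-- Conditional-mean bound on the rate function. -/
lemma rate_cond_bound [IsProbabilityMeasure P] (hmeas : Measurable X) (hp : 0 ≤ p)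
    (Q : Measure Ω) [IsProbabilityMeasure Q] (c : ℝ≥0∞) (hc : c ≠ 0)
    (hcle : ∀ f : Ω → ℝ≥0∞, Measurable f → c * ∫⁻ ω, f ω ∂Q ≤ ∫⁻ ω, f ω ∂P)
    (hX : Integrable X Q) (hXp : Integrable (fun ω => |X ω| ^ p) Q) :
    selfNormRate P X p (∫ ω, X ω ∂Q, ∫ ω, |X ω| ^ p ∂Q) ≤ - ENNReal.log c := by
  have hc1 : c ≤ 1 := by
    have := hcle (fun _ => 1) measurable_const
    simpa using this
  have hcT : c ≠ ⊤ := fun h => by simp [h] at hc1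
  obtain ⟨r, hr⟩ : ∃ r : ℝ, ENNReal.log c = (r : EReal) := by
    have h1 : ENNReal.log c ≠ ⊥ := by simpa [ENNReal.log_eq_bot_iff] using hc
    have h2 : ENNReal.log c ≠ ⊤ := by simpa [ENNReal.log_eq_top_iff] using hcT
    lift ENNReal.log c to ℝ using ⟨h2, h1⟩ with r
    exact ⟨r, rfl⟩
  refine iSup_le fun l => ?_
  set m1 := ∫ ω, X ω ∂Q
  set m2 := ∫ ω, |X ω| ^ p ∂Q
  set g := fun ω => l.1 * X ω + l.2 * |X ω| ^ p with hgdef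
  have hgint : Integrable g Q := (hX.const_mul l.1).add (hXp.const_mul l.2)
  have hgval : ∫ ω, g ω ∂Q = m1 * l.1 + m2 * l.2 := by
    rw [hgdef]
    rw [integral_add (hX.const_mul l.1) (hXp.const_mul l.2),
      integral_const_mul, integral_const_mul]
    ring
  have hkey : ENNReal.ofReal (Real.exp (m1 * l.1 + m2 * l.2)) * c
      ≤ ∫⁻ ω, ENNReal.ofReal (Real.exp (g ω)) ∂P := by
    rw [mul_comm]
    calc c * ENNReal.ofReal (Real.exp (m1 * l.1 + m2 * l.2))
        ≤ c * ∫⁻ ω, ENNReal.ofReal (Real.exp (g ω)) ∂Q := by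
          refine mul_le_mul_right ?_ c
          rw [← hgval]
          exact jensen_exp Q hgint
      _ ≤ ∫⁻ ω, ENNReal.ofReal (Real.exp (g ω)) ∂P :=
          hcle _ ((measurable_g hmeas hp l).exp.ennreal_ofReal)
  have hlog : ((m1 * l.1 + m2 * l.2 : ℝ) : EReal) + ENNReal.log c
      ≤ selfNormCumulant P X p l := by
    have := ENNReal.log_monotone hkey
    rw [ENNReal.log_mul_add, ENNReal.log_ofReal_of_pos (Real.exp_pos _),
      Real.log_exp] at this
    exact this
  rw [hr] at hlog ⊢
  calc ((m1 * l.1 + m2 * l.2 : ℝ) : EReal) - selfNormCumulant P X p l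
      ≤ ((m1 * l.1 + m2 * l.2 : ℝ) : EReal) - ((m1 * l.1 + m2 * l.2 : ℝ) + (r : ℝ) : EReal) := by
        refine EReal.sub_le_sub (le_refl _) ?_
        rw [EReal.coe_add] at hlog ⊢
        exact hlog
    _ = ((-r : ℝ) : EReal) := by
        rw [← EReal.coe_add, ← EReal.coe_sub]
        exact congrArg _ (by ring)
    _ = -((r : ℝ) : EReal) := by rw [EReal.coe_neg]


lemma cumulant_top_of_not_integrable [IsProbabilityMeasure P] (hmeas : Measurable X)
    (hp : 1 < p) (hni : ¬ Integrable (fun ω => |X ω| ^ p) P) (l : ℝ × ℝ) (hl2 : 0 < l.2) :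
    selfNormCumulant P X p l = ⊤ := by
  have hp0 : (0:ℝ) ≤ p := by linarith
  set M := (max 1 (2 * |l.1| / l.2)) ^ (p - 1)⁻¹ with hMdef
  have hmax1 : (1:ℝ) ≤ max 1 (2 * |l.1| / l.2) := le_max_left _ _
  have hmaxpos : (0:ℝ) < max 1 (2 * |l.1| / l.2) := lt_of_lt_of_le one_pos hmax1
  have hM1 : (1:ℝ) ≤ M := by
    calc (1:ℝ) = 1 ^ (p - 1)⁻¹ := (Real.one_rpow _).symm
      _ ≤ M := Real.rpow_le_rpow zero_le_one hmax1 (le_of_lt (inv_pos.2 (by linarith)))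
  have hMpos : (0:ℝ) < M := lt_of_lt_of_le one_pos hM1
  have hMpow : M ^ (p - 1) = max 1 (2 * |l.1| / l.2) := by
    rw [hMdef, ← Real.rpow_mul (le_of_lt hmaxpos), inv_mul_cancel₀ (by linarith : p - 1 ≠ 0),
      Real.rpow_one]
  have hMneg : M ^ (1 - p) = (M ^ (p - 1))⁻¹ := by
    rw [show (1 - p) = -(p - 1) by ring, Real.rpow_neg (le_of_lt hMpos)]
  have hMkey : |l.1| * M ^ (1 - p) ≤ l.2 / 2 := by
    rw [hMneg, hMpow]
    rw [mul_inv_le_iff₀ hmaxpos]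
    have hc : 2 * |l.1| / l.2 ≤ max 1 (2 * |l.1| / l.2) := le_max_right _ _
    have hfld : l.2 * (2 * |l.1| / l.2) = 2 * |l.1| := by field_simp
    nlinarith [abs_nonneg l.1]
  have hpoint : ∀ x : ℝ, l.2 / 2 * |x| ^ p - |l.1| * M ≤ l.1 * x + l.2 * |x| ^ p := by
    intro x
    have habs : |x| ≤ M + M ^ (1 - p) * |x| ^ p := by
      rcases le_or_gt |x| M with h | h
      · have h0 : 0 ≤ M ^ (1 - p) * |x| ^ p :=
          mul_nonneg (Real.rpow_nonneg (le_of_lt hMpos) _) (Real.rpow_nonneg (abs_nonneg x) _)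
        linarith
      · have hx0 : (0:ℝ) < |x| := lt_trans hMpos h
        have h1 : M ^ (p - 1) ≤ |x| ^ (p - 1) :=
          Real.rpow_le_rpow (le_of_lt hMpos) (le_of_lt h) (by linarith)
        have hMp : (0:ℝ) < M ^ (p - 1) := Real.rpow_pos_of_pos hMpos _
        have h2 : (|x| ^ (p - 1))⁻¹ ≤ (M ^ (p - 1))⁻¹ := by
          exact inv_anti₀ hMp h1
        have h3 : |x| ^ (1 - p) ≤ M ^ (1 - p) := by
          rw [hMneg, show (1 - p) = -(p - 1) by ring, Real.rpow_neg (le_of_lt hx0)]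
          exact h2
        have h4 : |x| ^ (1 - p) * |x| ^ p = |x| := by
          rw [← Real.rpow_add hx0]
          norm_num
        have h5 : |x| ^ (1 - p) * |x| ^ p ≤ M ^ (1 - p) * |x| ^ p :=
          mul_le_mul_of_nonneg_right h3 (Real.rpow_nonneg (abs_nonneg x) _)
        rw [h4] at h5
        linarith
    have h6 : |l.1| * |x| ≤ |l.1| * M + |l.1| * M ^ (1 - p) * |x| ^ p := by
      have := mul_le_mul_of_nonneg_left habs (abs_nonneg l.1)
      nlinarith
    have h7 : |l.1| * M ^ (1 - p) * |x| ^ p ≤ l.2 / 2 * |x| ^ p :=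
      mul_le_mul_of_nonneg_right hMkey (Real.rpow_nonneg (abs_nonneg x) _)
    have h8 : -(|l.1| * |x|) ≤ l.1 * x := by
      have := neg_abs_le (l.1 * x)
      rw [abs_mul] at this
      linarith
    linarith
  have hKnn : (0:ℝ) ≤ |l.1| * M := mul_nonneg (abs_nonneg _) (le_of_lt hMpos)
  have hle : ∀ ω, ENNReal.ofReal (l.2 / 2 * |X ω| ^ p)
      ≤ ENNReal.ofReal (Real.exp (l.1 * X ω + l.2 * |X ω| ^ p)) + ENNReal.ofReal (|l.1| * M) := by
    intro ω
    calc ENNReal.ofReal (l.2 / 2 * |X ω| ^ p)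
        ≤ ENNReal.ofReal (Real.exp (l.1 * X ω + l.2 * |X ω| ^ p) + |l.1| * M) := by
          refine ENNReal.ofReal_le_ofReal ?_
          have h1 := hpoint (X ω)
          have h2 := Real.add_one_le_exp (l.1 * X ω + l.2 * |X ω| ^ p)
          linarith
      _ = _ := ENNReal.ofReal_add (le_of_lt (Real.exp_pos _)) hKnn
  have hXpmeas : Measurable fun ω => |X ω| ^ p :=
    (Real.continuous_rpow_const hp0).measurable.comp hmeas.abs
  have h2 : ∫⁻ ω, ENNReal.ofReal (l.2 / 2 * |X ω| ^ p) ∂P = ⊤ := by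
    have heq : (fun ω => ENNReal.ofReal (l.2 / 2 * |X ω| ^ p))
        = fun ω => ENNReal.ofReal (l.2 / 2) * ENNReal.ofReal (|X ω| ^ p) :=
      funext fun ω => ENNReal.ofReal_mul (by positivity)
    rw [heq, lintegral_const_mul _ hXpmeas.ennreal_ofReal,
      lintegral_ofReal_eq_top_of_not_integrable hXpmeas.aestronglyMeasurable
        (fun ω => Real.rpow_nonneg (abs_nonneg _) _) hni]
    exact ENNReal.mul_top (by simp only [Ne, ENNReal.ofReal_eq_zero, not_le]; linarith)
  have h3 : (⊤ : ℝ≥0∞) ≤ ∫⁻ ω, ENNReal.ofReal (Real.exp (l.1 * X ω + l.2 * |X ω| ^ p)) ∂P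
      + ENNReal.ofReal (|l.1| * M) := by
    calc (⊤ : ℝ≥0∞) = ∫⁻ ω, ENNReal.ofReal (l.2 / 2 * |X ω| ^ p) ∂P := h2.symm
      _ ≤ ∫⁻ ω, (ENNReal.ofReal (Real.exp (l.1 * X ω + l.2 * |X ω| ^ p))
            + ENNReal.ofReal (|l.1| * M)) ∂P := lintegral_mono hle
      _ = _ := by
          rw [lintegral_add_right _ measurable_const, lintegral_const, measure_univ, mul_one]
  have h4 : ∫⁻ ω, ENNReal.ofReal (Real.exp (l.1 * X ω + l.2 * |X ω| ^ p)) ∂P = ⊤ := by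
    by_contra h
    exact absurd (top_le_iff.1 h3) (ENNReal.add_ne_top.2 ⟨h, ENNReal.ofReal_ne_top⟩)
  rw [selfNormCumulant, h4]
  exact ENNReal.log_top


lemma exists_boundary_le_of_not_integrable [IsProbabilityMeasure P] (hmeas : Measurable X)
    (hp : 1 < p) (hni : ¬ Integrable (fun ω => |X ω| ^ p) P) {z : ℝ} (hz0 : 0 < z)
    {α : ℝ × ℝ} (hα2 : 0 ≤ α.2) (hα1 : z * α.2 ^ (1/p) ≤ α.1) :
    ∃ β : ℝ × ℝ, 0 ≤ β.2 ∧ β.1 = z * β.2 ^ (1/p)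
      ∧ selfNormRate P X p β ≤ selfNormRate P X p α := by
  have hp0 : (0:ℝ) < p := by linarith
  have hα1nn : 0 ≤ α.1 := le_trans (mul_nonneg hz0.le (Real.rpow_nonneg hα2 _)) hα1
  have hdivnn : 0 ≤ α.1 / z := div_nonneg hα1nn hz0.le
  refine ⟨(α.1, (α.1 / z) ^ p), Real.rpow_nonneg hdivnn _, ?_, ?_⟩
  · show α.1 = z * ((α.1 / z) ^ p) ^ (1/p)
    rw [← Real.rpow_mul hdivnn, mul_one_div, div_self hp0.ne', Real.rpow_one]
    field_simp
  · have hβ2 : α.2 ≤ (α.1 / z) ^ p := by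
      have h1 : α.2 ^ (1/p) ≤ α.1 / z := (le_div_iff₀ hz0).2 (by linarith [mul_comm z (α.2 ^ (1/p))])
      calc α.2 = (α.2 ^ (1/p)) ^ p := by
            rw [← Real.rpow_mul hα2, one_div, inv_mul_cancel₀ hp0.ne', Real.rpow_one]
        _ ≤ (α.1 / z) ^ p := Real.rpow_le_rpow (Real.rpow_nonneg hα2 _) h1 hp0.le
    refine iSup_le fun l => ?_
    rcases le_or_gt l.2 0 with hl2 | hl2
    · refine le_trans ?_ (le_iSup (fun l : ℝ × ℝ =>
        ((α.1 * l.1 + α.2 * l.2 : ℝ) : EReal) - selfNormCumulant P X p l) l)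
      refine EReal.sub_le_sub ?_ (le_refl _)
      rw [EReal.coe_le_coe_iff]
      have h := mul_le_mul_of_nonpos_right hβ2 hl2
      simp only
      linarith
    · rw [cumulant_top_of_not_integrable hmeas hp hni l hl2, EReal.sub_top]
      exact bot_le

lemma exists_boundary_le_of_integrable [IsProbabilityMeasure P] (hmeas : Measurable X)
    (hp : 1 < p) (hInt : Integrable (fun ω => |X ω| ^ p) P) {z : ℝ} (hz0 : 0 < z)
    (hμ2 : 0 < ∫ ω, |X ω| ^ p ∂P)
    (hmean : (∫ ω, X ω ∂P) < z * (∫ ω, |X ω| ^ p ∂P) ^ (1/p))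
    {α : ℝ × ℝ} (hα2 : 0 ≤ α.2) (hα1 : z * α.2 ^ (1/p) ≤ α.1) :
    ∃ β : ℝ × ℝ, 0 ≤ β.2 ∧ β.1 = z * β.2 ^ (1/p)
      ∧ selfNormRate P X p β ≤ selfNormRate P X p α := by
  have hp0 : (0:ℝ) ≤ p := by linarith
  have hXint : Integrable X P := by
    refine Integrable.mono' ((integrable_const (1:ℝ)).add hInt) hmeas.aestronglyMeasurable ?_
    filter_upwards with ω
    simp only [Pi.add_apply]
    rw [Real.norm_eq_abs]
    rcases le_or_gt (|X ω|) 1 with h | h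
    · have h0 : 0 ≤ |X ω| ^ p := Real.rpow_nonneg (abs_nonneg _) _
      linarith
    · calc |X ω| = |X ω| ^ (1:ℝ) := (Real.rpow_one _).symm
        _ ≤ |X ω| ^ p := Real.rpow_le_rpow_of_exponent_le h.le hp.le
        _ ≤ 1 + |X ω| ^ p := by linarith
  set μ1 := ∫ ω, X ω ∂P with hμ1def
  set μ2 := ∫ ω, |X ω| ^ p ∂P with hμ2def
  have hΛμ : selfNormRate P X p (μ1, μ2) ≤ 0 := by
    have h := rate_cond_bound (P := P) hmeas hp0 P 1 one_ne_zero (fun f _ => by simp) hXint hInt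
    simpa using h
  set F : ℝ → ℝ := fun t => ((1-t) * μ1 + t * α.1) - z * ((1-t) * μ2 + t * α.2) ^ (1/p) with hFdef
  have hcont : Continuous F := by
    have h1 : Continuous fun t : ℝ => (1-t) * μ2 + t * α.2 := by continuity
    have h2 : Continuous fun x : ℝ => x ^ (1/p) := Real.continuous_rpow_const (by positivity)
    exact ((continuous_const.sub continuous_id).mul continuous_const
      |>.add (continuous_id.mul continuous_const)).sub (continuous_const.mul (h2.comp h1))
  have hF0 : F 0 < 0 := by
    have h : F 0 = μ1 - z * μ2 ^ (1/p) := by simp [hFdef]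
    rw [h]; linarith
  have hF1 : 0 ≤ F 1 := by
    have h : F 1 = α.1 - z * α.2 ^ (1/p) := by simp [hFdef]
    rw [h]; linarith
  obtain ⟨t, ht, hFt⟩ : ∃ t ∈ Icc (0:ℝ) 1, F t = 0 := by
    have h := intermediate_value_Icc (zero_le_one) hcont.continuousOn
    obtain ⟨t, ht, hFt⟩ := h ⟨hF0.le, hF1⟩
    exact ⟨t, ht, hFt⟩
  refine ⟨((1-t) * μ1 + t * α.1, (1-t) * μ2 + t * α.2),
    add_nonneg (mul_nonneg (by linarith [ht.2]) hμ2.le) (mul_nonneg ht.1 hα2), ?_, ?_⟩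
  · simp only [hFdef] at hFt
    simp only
    linarith
  · refine iSup_le fun l => ?_
    have hAbot : selfNormCumulant P X p l ≠ ⊥ := cumulant_ne_bot hmeas hp0 l
    rcases eq_or_ne (selfNormCumulant P X p l) ⊤ with hAtop | hAtop
    · rw [hAtop, EReal.sub_top]; exact bot_le
    obtain ⟨a, ha⟩ : ∃ a : ℝ, selfNormCumulant P X p l = (a : EReal) := by
      lift (selfNormCumulant P X p l) to ℝ using ⟨hAtop, hAbot⟩ with a
      exact ⟨a, rfl⟩
    have htermμ : ((μ1 * l.1 + μ2 * l.2 : ℝ) : EReal) - selfNormCumulant P X p l ≤ 0 :=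
      le_trans (le_iSup (fun l : ℝ × ℝ =>
        ((μ1 * l.1 + μ2 * l.2 : ℝ) : EReal) - selfNormCumulant P X p l) l) hΛμ
    have hμa : μ1 * l.1 + μ2 * l.2 ≤ a := by
      rw [ha, ← EReal.coe_sub] at htermμ
      have := EReal.coe_nonpos.1 htermμ
      linarith
    rcases eq_or_ne (selfNormRate P X p α) ⊤ with hT | hT
    · rw [hT]; exact le_top
    have hge0 : (0 : EReal) ≤ selfNormRate P X p α := rate_nonneg α
    have hnbot : selfNormRate P X p α ≠ ⊥ := fun h => by simp [h] at hge0
    obtain ⟨cc, hcc⟩ : ∃ cc : ℝ, selfNormRate P X p α = (cc : EReal) := by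
      lift (selfNormRate P X p α) to ℝ using ⟨hT, hnbot⟩ with cc
      exact ⟨cc, rfl⟩
    have hccnn : 0 ≤ cc := by
      rw [hcc] at hge0
      exact_mod_cast hge0
    have htermα : α.1 * l.1 + α.2 * l.2 - a ≤ cc := by
      have h := le_trans (le_iSup (fun l : ℝ × ℝ =>
        ((α.1 * l.1 + α.2 * l.2 : ℝ) : EReal) - selfNormCumulant P X p l) l) (le_of_eq hcc)
      rw [ha, ← EReal.coe_sub, EReal.coe_le_coe_iff] at h
      exact h
    have hreal : ((1-t) * μ1 + t * α.1) * l.1 + ((1-t) * μ2 + t * α.2) * l.2 - a ≤ cc := by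
      have e1 : (1-t) * (μ1 * l.1 + μ2 * l.2) ≤ (1-t) * a :=
        mul_le_mul_of_nonneg_left hμa (by linarith [ht.2])
      have e2 : t * (α.1 * l.1 + α.2 * l.2 - a) ≤ t * cc :=
        mul_le_mul_of_nonneg_left htermα ht.1
      have e3 : t * cc ≤ cc := by nlinarith [ht.1, ht.2]
      nlinarith
    calc (((((1-t) * μ1 + t * α.1, (1-t) * μ2 + t * α.2) : ℝ × ℝ).1 * l.1
          + (((1-t) * μ1 + t * α.1, (1-t) * μ2 + t * α.2) : ℝ × ℝ).2 * l.2 : ℝ) : EReal)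
          - selfNormCumulant P X p l
        = ((((1-t) * μ1 + t * α.1) * l.1 + ((1-t) * μ2 + t * α.2) * l.2 - a : ℝ) : EReal) := by
          rw [ha, ← EReal.coe_sub]
      _ ≤ ((cc : ℝ) : EReal) := EReal.coe_le_coe_iff.2 hreal
      _ = selfNormRate P X p α := hcc.symm

end Aux

/-- **Lemma 1.** For `p > 1`, `P(X > 0) > 0` and the law of `X` not concentrated on at most
two points, for every `z` with `max(z*, 0) < z < 1` one has
`inf_{α ∈ B_z} Λ(α) = inf_{α ∈ B̃_z} Λ(α) < ∞`. -/
theorem rate_inf_on_Bz_eq_inf_on_boundary_and_finite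
    {Ω : Type*} [MeasurableSpace Ω] (P : Measure Ω) [IsProbabilityMeasure P]
    (X : Ω → ℝ) (hmeas : Measurable X)
    (hpos : 0 < P {ω | 0 < X ω})
    (hnondeg : ¬ ∃ a b : ℝ, ∀ᵐ ω ∂P, X ω = a ∨ X ω = b)
    (p : ℝ) (hp : 1 < p)
    (z : ℝ)
    (hz1 : max (if Integrable (fun ω => |X ω| ^ p) P
        then (∫ ω, X ω ∂P) * (∫ ω, |X ω| ^ p ∂P) ^ (-(1 / p)) else 0) 0 < z)
    (hz2 : z < 1) :
    (⨅ α ∈ {x : ℝ × ℝ | 0 ≤ x.2 ∧ z * x.2 ^ (1 / p) ≤ x.1}, selfNormRate P X p α)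
        = (⨅ α ∈ {x : ℝ × ℝ | 0 ≤ x.2 ∧ x.1 = z * x.2 ^ (1 / p)}, selfNormRate P X p α)
      ∧ (⨅ α ∈ {x : ℝ × ℝ | 0 ≤ x.2 ∧ z * x.2 ^ (1 / p) ≤ x.1}, selfNormRate P X p α)
        < ⊤ := by

  have hz0 : 0 < z := lt_of_le_of_lt (le_max_right _ 0) hz1
  have hp0 : (0:ℝ) ≤ p := by linarith
  have hkey : ∀ α : ℝ × ℝ, 0 ≤ α.2 → z * α.2 ^ (1/p) ≤ α.1 →
      ∃ β : ℝ × ℝ, 0 ≤ β.2 ∧ β.1 = z * β.2 ^ (1/p)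
        ∧ selfNormRate P X p β ≤ selfNormRate P X p α := by
    intro α hα2 hα1
    by_cases hInt : Integrable (fun ω => |X ω| ^ p) P
    · have hnn : (0:ℝ) ≤ ∫ ω, |X ω| ^ p ∂P :=
        integral_nonneg fun ω => Real.rpow_nonneg (abs_nonneg _) _
      have hμ2 : 0 < ∫ ω, |X ω| ^ p ∂P := by
        rcases lt_or_eq_of_le hnn with h | h
        · exact h
        · exfalso
          have hae : ∀ᵐ ω ∂P, |X ω| ^ p = 0 := by
            have := (integral_eq_zero_iff_of_nonneg
              (fun ω => Real.rpow_nonneg (abs_nonneg _) _) hInt).1 h.symm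
            filter_upwards [this] with ω hω using hω
          have hae2 : ∀ᵐ ω ∂P, ¬ (0 < X ω) := by
            filter_upwards [hae] with ω h hx
            have hX0 : |X ω| = 0 := by
              by_contra hne
              have : (0:ℝ) < |X ω| := lt_of_le_of_ne (abs_nonneg _) (Ne.symm hne)
              have := Real.rpow_pos_of_pos this p
              linarith [h]
            rw [abs_eq_zero] at hX0
            rw [hX0] at hx
            exact lt_irrefl 0 hx
          have h0 := ae_iff.mp hae2
          simp only [not_not] at h0
          exact hpos.ne' h0
      have hzs : (∫ ω, X ω ∂P) * (∫ ω, |X ω| ^ p ∂P) ^ (-(1/p)) < z := by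
        rw [if_pos hInt] at hz1
        exact lt_of_le_of_lt (le_max_left _ _) hz1
      have hμ2p : 0 < (∫ ω, |X ω| ^ p ∂P) ^ (1/p) := Real.rpow_pos_of_pos hμ2 _
      have hmean : (∫ ω, X ω ∂P) < z * (∫ ω, |X ω| ^ p ∂P) ^ (1/p) := by
        rw [Real.rpow_neg hnn, ← div_eq_mul_inv, div_lt_iff₀ hμ2p] at hzs
        linarith [hzs]
      exact exists_boundary_le_of_integrable hmeas hp hInt hz0 hμ2 hmean hα2 hα1
    · exact exists_boundary_le_of_not_integrable hmeas hp hInt hz0 hα2 hα1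
  constructor
  · refine le_antisymm ?_ ?_
    · exact biInf_mono fun x hx => ⟨hx.1, le_of_eq hx.2.symm⟩
    · refine le_iInf₂ fun α hα => ?_
      obtain ⟨β, hβ2, hβeq, hle⟩ := hkey α hα.1 hα.2
      exact le_trans (iInf₂_le β ⟨hβ2, hβeq⟩) hle
  · -- finiteness
    have h1z : 1 < 1/z := by rw [lt_div_iff₀ hz0]; linarith
    set r := (1 + 1/z)/2 with hrdef
    have hr1 : 1 < r := by rw [hrdef]; linarith
    have hrz : r < 1/z := by rw [hrdef]; linarith
    have hzr : z * r < 1 := by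
      have h := mul_lt_mul_of_pos_left hrz hz0
      rw [mul_one_div, div_self hz0.ne'] at h
      exact h
    obtain ⟨k, hk⟩ : ∃ k : ℤ, P {ω | X ω ∈ Ioc (r ^ k) (r ^ (k+1))} ≠ 0 := by
      by_contra h
      push_neg at h
      have hcover : {ω | 0 < X ω} ⊆ ⋃ k : ℤ, {ω | X ω ∈ Ioc (r ^ k) (r ^ (k+1))} := by
        intro ω hω
        obtain ⟨n, hn⟩ := exists_mem_Ioc_zpow hω hr1
        exact mem_iUnion.2 ⟨n, hn⟩
      exact hpos.ne' (measure_mono_null hcover (measure_iUnion_null h))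
    set a := r ^ k with hadef
    set b := r ^ (k+1) with hbdef
    have hr0 : (0:ℝ) < r := by linarith
    have ha0 : (0:ℝ) < a := zpow_pos hr0 k
    have hab : b = a * r := by rw [hadef, hbdef, zpow_add_one₀ hr0.ne']
    have hb0 : (0:ℝ) < b := by rw [hab]; positivity
    set C := {ω | X ω ∈ Ioc a b} with hCdef
    have hCmeas : MeasurableSet C := hmeas measurableSet_Ioc
    haveI : IsProbabilityMeasure (P[|C]) := cond_isProbabilityMeasure hk
    have hQae : ∀ᵐ ω ∂(P[|C]), X ω ∈ Ioc a b := by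
      have h1 : ∀ᵐ ω ∂(P.restrict C), X ω ∈ Ioc a b := by
        filter_upwards [ae_restrict_mem hCmeas] with ω hω using hω
      have h2 : P[|C] = (P C)⁻¹ • P.restrict C := rfl
      rw [h2]
      exact Measure.ae_smul_measure h1 _
    have hXQ : Integrable X (P[|C]) := by
      refine Integrable.mono' (integrable_const b) hmeas.aestronglyMeasurable ?_
      filter_upwards [hQae] with ω hω
      rw [Real.norm_eq_abs, abs_of_pos (lt_trans ha0 hω.1)]
      exact hω.2
    have habs_eq : ∀ᵐ ω ∂(P[|C]), |X ω| ≤ b := by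
      filter_upwards [hQae] with ω hω
      rw [abs_of_pos (lt_trans ha0 hω.1)]
      exact hω.2
    have hXpQ : Integrable (fun ω => |X ω| ^ p) (P[|C]) := by
      refine Integrable.mono' (integrable_const (b ^ p))
        (((Real.continuous_rpow_const hp0).measurable.comp hmeas.abs).aestronglyMeasurable) ?_
      filter_upwards [habs_eq] with ω hω
      rw [Real.norm_eq_abs, abs_of_nonneg (Real.rpow_nonneg (abs_nonneg _) _)]
      exact Real.rpow_le_rpow (abs_nonneg _) hω hp0
    have hcle : ∀ f : Ω → ℝ≥0∞, Measurable f →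
        P C * ∫⁻ ω, f ω ∂(P[|C]) ≤ ∫⁻ ω, f ω ∂P := by
      intro f hf
      have h2 : P[|C] = (P C)⁻¹ • P.restrict C := rfl
      rw [h2, lintegral_smul_measure, smul_eq_mul, ← mul_assoc,
        ENNReal.mul_inv_cancel hk (measure_ne_top P C), one_mul]
      exact lintegral_mono' Measure.restrict_le_self (le_refl _)
    have hbound := rate_cond_bound (P := P) hmeas hp0 (P[|C]) (P C) hk hcle hXQ hXpQ
    set m1 := ∫ ω, X ω ∂(P[|C]) with hm1def
    set m2 := ∫ ω, |X ω| ^ p ∂(P[|C]) with hm2def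
    have hm1 : a ≤ m1 := by
      have h := integral_mono_ae (integrable_const a) hXQ
        (by filter_upwards [hQae] with ω hω using hω.1.le)
      rwa [integral_const, probReal_univ, smul_eq_mul, one_mul] at h
    have hm2b : m2 ≤ b ^ p := by
      have h := integral_mono_ae hXpQ (integrable_const (b ^ p))
        (by filter_upwards [habs_eq] with ω hω using
          Real.rpow_le_rpow (abs_nonneg _) hω hp0)
      rwa [integral_const, probReal_univ, smul_eq_mul, one_mul] at h
    have hm2nn : (0:ℝ) ≤ m2 := integral_nonneg fun ω => Real.rpow_nonneg (abs_nonneg _) _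
    have hmem : ((m1, m2) : ℝ × ℝ) ∈ {x : ℝ × ℝ | 0 ≤ x.2 ∧ z * x.2 ^ (1/p) ≤ x.1} := by
      refine ⟨hm2nn, ?_⟩
      calc z * m2 ^ (1/p) ≤ z * (b ^ p) ^ (1/p) :=
            mul_le_mul_of_nonneg_left
              (Real.rpow_le_rpow hm2nn hm2b (by positivity)) hz0.le
        _ = z * b := by
            rw [← Real.rpow_mul hb0.le, mul_one_div, div_self (by linarith : p ≠ 0),
              Real.rpow_one]
        _ = z * (a * r) := by rw [hab]
        _ ≤ a := by nlinarith
        _ ≤ m1 := hm1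
    refine lt_of_le_of_lt (iInf₂_le ((m1, m2) : ℝ × ℝ) hmem) (lt_of_le_of_lt hbound ?_)
    exact lt_top_iff_ne_top.2 fun h =>
      hk (ENNReal.log_eq_bot_iff.1 (EReal.neg_eq_top_iff.1 h))
end

section
/- (Lemma 2) Let p > 1 and let μ be a Borel probability measure on [0,∞) with ∫_{[0,∞)} t^p dμ(t) = ∞. Then (∫_{[0,x]} t dμ(t))^p = o(∫_{[0,x]} t^p dμ(t)) as x → ∞, i.e., the ratio (∫_{[0,x]} t dμ(t))^p / ∫_{[0,x]} t^p dμ(t) tends to 0 as x → ∞. -/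
open MeasureTheory Filter Set
open scoped ENNReal
open scoped Topology

/-- **Lemma 2.** Let `p > 1` and let `μ` be a Borel probability measure on `[0,∞)` with
`∫ t^p dμ(t) = ∞`. Then `(∫_{[0,x]} t dμ(t))^p = o(∫_{[0,x]} t^p dμ(t))` as `x → ∞`. -/
theorem truncated_mean_pow_little_o_truncated_pth_moment
    (p : ℝ) (hp : 1 < p)
    (μ : Measure ℝ) [IsProbabilityMeasure μ]
    (hsupp : μ (Set.Iio 0) = 0)
    (hinf : ∫⁻ t in Set.Ici (0 : ℝ), ENNReal.ofReal (t ^ p) ∂μ = ⊤) :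
    Tendsto
      (fun x : ℝ =>
        (∫ t in Set.Icc (0 : ℝ) x, t ∂μ) ^ p / ∫ t in Set.Icc (0 : ℝ) x, t ^ p ∂μ)
      atTop (nhds 0) := by
  have hp0 : (0:ℝ) < p := by linarith
  -- measurability
  have hmP : Measurable fun t : ℝ => ENNReal.ofReal (t ^ p) :=
    ENNReal.measurable_ofReal.comp ((Real.continuous_rpow_const hp0.le).measurable)
  have hmL : Measurable fun t : ℝ => ENNReal.ofReal t :=
    ENNReal.measurable_ofReal
  set L : ℝ → ℝ≥0∞ := fun x => ∫⁻ t in Icc (0:ℝ) x, ENNReal.ofReal t ∂μ with hLdef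
  set P : ℝ → ℝ≥0∞ := fun x => ∫⁻ t in Icc (0:ℝ) x, ENNReal.ofReal (t ^ p) ∂μ with hPdef
  -- the real integrals equal the toReal of the lintegrals
  have hM : ∀ x : ℝ, ∫ t in Icc (0:ℝ) x, t ∂μ = (L x).toReal := by
    intro x
    exact integral_eq_lintegral_of_nonneg_ae (μ := μ.restrict (Icc 0 x)) (f := fun t => t)
      (ae_restrict_of_forall_mem measurableSet_Icc fun t ht => ht.1)
      measurable_id.aestronglyMeasurable
  have hN : ∀ x : ℝ, ∫ t in Icc (0:ℝ) x, t ^ p ∂μ = (P x).toReal := by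
    intro x
    exact integral_eq_lintegral_of_nonneg_ae (μ := μ.restrict (Icc 0 x))
      (f := fun t => t ^ p)
      (ae_restrict_of_forall_mem measurableSet_Icc fun t ht => Real.rpow_nonneg ht.1 p)
      (Real.continuous_rpow_const hp0.le).measurable.aestronglyMeasurable
  -- P x is finite for x ≥ 0
  have hPfin : ∀ x : ℝ, 0 ≤ x → P x ≠ ⊤ := by
    intro x hx
    have : P x ≤ ENNReal.ofReal (x ^ p) * μ (Icc 0 x) := by
      rw [← setLIntegral_const]
      exact setLIntegral_mono measurable_const fun t ht =>
        ENNReal.ofReal_le_ofReal (Real.rpow_le_rpow ht.1 ht.2 hp0.le)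
    exact ne_top_of_le_ne_top (by
      exact ENNReal.mul_ne_top ENNReal.ofReal_ne_top (measure_ne_top μ _)) this
  -- P tends to ⊤
  have hPtop : Tendsto P atTop (𝓝 ⊤) := by
    set ν := μ.withDensity fun t => ENNReal.ofReal (t ^ p) with hν
    have hPν : ∀ x : ℝ, P x = ν (Icc 0 x) := fun x =>
      (withDensity_apply _ measurableSet_Icc).symm
    have hU : (⋃ x : ℝ, Icc (0:ℝ) x) = Ici 0 := by
      ext t
      simp only [mem_iUnion, mem_Icc, mem_Ici]
      exact ⟨fun ⟨x, h, _⟩ => h, fun h => ⟨t, h, le_rfl⟩⟩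
    have hmono : Monotone fun x : ℝ => Icc (0:ℝ) x := fun a b hab =>
      Icc_subset_Icc_right hab
    have := tendsto_measure_iUnion_atTop (μ := ν) hmono
    rw [hU] at this
    have hνIci : ν (Ici 0) = ⊤ := by
      rw [hν, withDensity_apply _ measurableSet_Ici]; exact hinf
    rw [hνIci] at this
    exact this.congr fun x => (hPν x).symm
  -- conjugate exponent
  set q : ℝ := p.conjExponent with hqdef
  have hpq : p.HolderConjugate q := Real.HolderConjugate.conjExponent hp
  -- main ENNReal limit
  have key : Tendsto (fun x : ℝ => L x ^ p / P x) atTop (𝓝 0) := by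
    rw [ENNReal.tendsto_nhds_zero]
    intro ε hε
    set ε' : ℝ≥0∞ := min ε 1 with hε'def
    have hε'0 : ε' ≠ 0 := (lt_min hε zero_lt_one).ne'
    have hε'top : ε' ≠ ⊤ := ne_top_of_le_ne_top ENNReal.one_ne_top (min_le_right _ _)
    set c2 : ℝ≥0∞ := (2:ℝ≥0∞) ^ p with hc2def
    have hc20 : c2 ≠ 0 := (ENNReal.rpow_pos (by norm_num) (by norm_num)).ne'
    have hc2top : c2 ≠ ⊤ := ENNReal.rpow_ne_top_of_nonneg hp0.le (by norm_num)
    set δ : ℝ≥0∞ := (ε' / c2) ^ (1 / (p - 1)) with hδdef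
    have hbase0 : ε' / c2 ≠ 0 := by
      simp [ENNReal.div_eq_zero_iff, hε'0, hc2top]
    have hbasetop : ε' / c2 ≠ ⊤ := by
      simp [ENNReal.div_eq_top, hε'top, hc20]
    have hδ0 : δ ≠ 0 := by
      simp [hδdef, ENNReal.rpow_eq_zero_iff, hbase0, hbasetop]
    have hδtop : δ ≠ ⊤ := by
      simp [hδdef, ENNReal.rpow_eq_top_iff, hbase0, hbasetop]
    have hδkey : c2 * δ ^ (p - 1) = ε' := by
      rw [hδdef, ← ENNReal.rpow_mul, one_div, inv_mul_cancel₀ (by linarith : p - 1 ≠ 0),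
        ENNReal.rpow_one, ENNReal.mul_div_cancel hc20 hc2top]
    -- choose A
    obtain ⟨A, hA0, hAδ⟩ : ∃ A : ℝ, 0 ≤ A ∧ μ (Ioi A) ≤ δ := by
      have hI : (⋂ A : ℝ, Ioi A) = (∅ : Set ℝ) := by
        ext t
        simp only [mem_iInter, mem_Ioi, mem_empty_iff_false, iff_false, not_forall, not_lt]
        exact ⟨t, le_rfl⟩
      have h := tendsto_measure_iInter_atTop (μ := μ) (s := fun A : ℝ => Ioi A)
        (fun A => (measurableSet_Ioi).nullMeasurableSet)
        (fun a b hab => Ioi_subset_Ioi hab) ⟨0, measure_ne_top μ _⟩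
      rw [hI, measure_empty] at h
      have h2 := h.eventually_lt_const (hδ0.bot_lt)
      obtain ⟨A, hA⟩ := (h2.and (eventually_ge_atTop (0:ℝ))).exists
      exact ⟨A, hA.2, hA.1.le⟩
    set D : ℝ≥0∞ := δ ^ (1 / q) with hDdef
    have hq0 : (0:ℝ) < q := hpq.symm.pos
    have hD0 : D ≠ 0 := by
      simp [hDdef, ENNReal.rpow_eq_zero_iff, hδ0, hδtop]
    have hDtop : D ≠ ⊤ := by
      simp [hDdef, ENNReal.rpow_eq_top_iff, hδ0, hδtop]
    -- threshold for P
    set c : ℝ≥0∞ := max 1 ((ENNReal.ofReal A / D) ^ p) with hcdef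
    have hctop : c < ⊤ := by
      apply max_lt ENNReal.one_lt_top
      apply ENNReal.rpow_lt_top_of_nonneg hp0.le
      exact (ENNReal.div_lt_top ENNReal.ofReal_ne_top hD0).ne
    filter_upwards [eventually_ge_atTop A, eventually_ge_atTop (0:ℝ),
      hPtop.eventually_const_le hctop] with x hxA hx0 hPc
    have hP1 : 1 ≤ P x := le_trans (le_max_left _ _) hPc
    have hPA : (ENNReal.ofReal A / D) ^ p ≤ P x := le_trans (le_max_right _ _) hPc
    have hPne0 : P x ≠ 0 := fun h => by
      rw [h] at hP1
      exact (not_le.mpr (zero_lt_one (α := ℝ≥0∞))) hP1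
    have hPnetop : P x ≠ ⊤ := hPfin x hx0
    -- split L x
    have hsplit : L x = (∫⁻ t in Icc (0:ℝ) A, ENNReal.ofReal t ∂μ)
        + ∫⁻ t in Ioc A x, ENNReal.ofReal t ∂μ := by
      show (∫⁻ t in Icc (0:ℝ) x, ENNReal.ofReal t ∂μ) = _
      rw [← Icc_union_Ioc_eq_Icc hA0 hxA,
        lintegral_union measurableSet_Ioc ((Iic_disjoint_Ioc le_rfl).mono Icc_subset_Iic_self le_rfl)]
    have hbound1 : ∫⁻ t in Icc (0:ℝ) A, ENNReal.ofReal t ∂μ ≤ ENNReal.ofReal A := by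
      calc ∫⁻ t in Icc (0:ℝ) A, ENNReal.ofReal t ∂μ
          ≤ ∫⁻ _ in Icc (0:ℝ) A, ENNReal.ofReal A ∂μ :=
            setLIntegral_mono measurable_const fun t ht => ENNReal.ofReal_le_ofReal ht.2
        _ = ENNReal.ofReal A * μ (Icc 0 A) := setLIntegral_const _ _
        _ ≤ ENNReal.ofReal A * 1 := by gcongr; exact prob_le_one
        _ = ENNReal.ofReal A := mul_one _
    -- Hölder on (A, x]
    have hbound2 : ∫⁻ t in Ioc A x, ENNReal.ofReal t ∂μ ≤ P x ^ (1 / p) * D := by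
      have hH := ENNReal.lintegral_mul_le_Lp_mul_Lq (μ.restrict (Ioc A x)) hpq
        (f := fun t => ENNReal.ofReal t) (g := fun _ => 1)
        hmL.aemeasurable aemeasurable_const
      simp only [Pi.mul_apply, mul_one, ENNReal.one_rpow, lintegral_one,
        Measure.restrict_apply_univ] at hH
      refine le_trans hH (mul_le_mul' ?_ ?_)
      · -- (∫⁻ (ofReal t)^p)^(1/p) ≤ P x ^ (1/p)
        apply ENNReal.rpow_le_rpow _ (by positivity)
        have heq : ∫⁻ t in Ioc A x, ENNReal.ofReal t ^ p ∂μ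
            = ∫⁻ t in Ioc A x, ENNReal.ofReal (t ^ p) ∂μ := by
          refine setLIntegral_congr_fun measurableSet_Ioc (fun t ht => ?_)
          rw [← ENNReal.ofReal_rpow_of_nonneg (le_trans hA0 ht.1.le) hp0.le]
        rw [heq]
        exact lintegral_mono_set fun t ht => ⟨le_trans hA0 ht.1.le, ht.2⟩
      · -- μ(Ioc A x)^(1/q) ≤ D
        exact ENNReal.rpow_le_rpow
          (le_trans (measure_mono Ioc_subset_Ioi_self) hAδ) (by positivity)
    have hA2 : ENNReal.ofReal A ≤ P x ^ (1 / p) * D := by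
      rw [← ENNReal.div_le_iff hD0 hDtop]
      calc ENNReal.ofReal A / D
          = ((ENNReal.ofReal A / D) ^ p) ^ (1 / p) := by
            rw [← ENNReal.rpow_mul, mul_one_div, div_self hp0.ne', ENNReal.rpow_one]
        _ ≤ P x ^ (1 / p) := ENNReal.rpow_le_rpow hPA (by positivity)
    have hL2 : L x ≤ 2 * (P x ^ (1 / p) * D) := by
      rw [hsplit, two_mul]
      exact add_le_add (le_trans hbound1 hA2) hbound2
    have hLp : L x ^ p ≤ c2 * δ ^ (p - 1) * P x := by
      calc L x ^ p ≤ (2 * (P x ^ (1 / p) * D)) ^ p :=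
            ENNReal.rpow_le_rpow hL2 hp0.le
        _ = c2 * ((P x ^ (1 / p)) ^ p * D ^ p) := by
            rw [ENNReal.mul_rpow_of_nonneg _ _ hp0.le,
              ENNReal.mul_rpow_of_nonneg _ _ hp0.le]
        _ = c2 * (P x * δ ^ (p - 1)) := by
            rw [← ENNReal.rpow_mul, one_div_mul_cancel hp0.ne', ENNReal.rpow_one,
              hDdef, ← ENNReal.rpow_mul, one_div, inv_mul_eq_div, hpq.div_conj_eq_sub_one]
        _ = c2 * δ ^ (p - 1) * P x := by ring
    rw [ENNReal.div_le_iff hPne0 hPnetop]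
    calc L x ^ p ≤ c2 * δ ^ (p - 1) * P x := hLp
      _ = ε' * P x := by rw [hδkey]
      _ ≤ ε * P x := by gcongr; exact min_le_left _ _
  -- convert to the real statement
  have hcomp : Tendsto (fun x : ℝ => (L x ^ p).toReal / (P x).toReal) atTop (𝓝 0) := by
    have h := (ENNReal.tendsto_toReal (by norm_num : (0:ℝ≥0∞) ≠ ⊤)).comp key
    simpa [Function.comp_def, ENNReal.toReal_div] using h
  refine hcomp.congr fun x => ?_
  rw [hM, hN, ENNReal.toReal_rpow]
end

section
/- (Tilted mean approaches the essential supremum) Let ξ be a real random variable and h ∈ ℝ such that P(ξ ≤ h) = 1 and P(ξ ≥ h − δ) > 0 for every δ > 0. Then for every λ > 0 the random variables e^{λξ} and ξ·e^{λξ} are integrable, and lim_{λ→∞} E[ξ·e^{λξ}] / E[e^{λξ}] = h. (Equivalently: the mean of the Cramér transform ξ^{(λ)}, whose law has density e^{λx}/E[e^{λξ}] with respect to the law of ξ, converges to h as λ → ∞.) -/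
open MeasureTheory Filter Real

lemma aux_mul_exp_le_inv {l u : ℝ} (hl : 0 < l) :
    u * Real.exp (-(l * u)) ≤ 1 / l := by
  have h1 : l * u ≤ Real.exp (l * u) := by linarith [Real.add_one_le_exp (l * u)]
  have h2 : l * u * Real.exp (-(l * u)) ≤ 1 := by
    calc l * u * Real.exp (-(l * u)) ≤ Real.exp (l * u) * Real.exp (-(l * u)) :=
          mul_le_mul_of_nonneg_right h1 (Real.exp_pos _).le
      _ = 1 := by rw [← Real.exp_add]; simp
  rw [le_div_iff₀ hl]
  calc u * Real.exp (-(l * u)) * l = l * u * Real.exp (-(l * u)) := by ring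
    _ ≤ 1 := h2

lemma aux_mul_exp_antitone {l δ u : ℝ} (hδ : 0 < δ) (hlδ : 1 ≤ l * δ) (hu : δ ≤ u) :
    u * Real.exp (-(l * u)) ≤ δ * Real.exp (-(l * δ)) := by
  have h1 : u ≤ δ * Real.exp (l * (u - δ)) := by
    have e1 : l * (u - δ) + 1 ≤ Real.exp (l * (u - δ)) := Real.add_one_le_exp _
    nlinarith [mul_nonneg (sub_nonneg.2 hu) (sub_nonneg.2 hlδ)]
  calc u * Real.exp (-(l * u)) ≤ δ * Real.exp (l * (u - δ)) * Real.exp (-(l * u)) :=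
        mul_le_mul_of_nonneg_right h1 (Real.exp_pos _).le
    _ = δ * Real.exp (-(l * δ)) := by
        rw [mul_assoc, ← Real.exp_add]; congr 2; ring

lemma aux_pointwise {l δ h x : ℝ} (hδ : 0 < δ) (hlδ : 1 ≤ l * δ) (_hx : x ≤ h) :
    (h - x) * Real.exp (l * x) ≤ δ * Real.exp (l * x) + δ * Real.exp (l * (h - δ)) := by
  rcases le_or_gt (h - x) δ with hc | hc
  · have h1 : (h - x) * Real.exp (l * x) ≤ δ * Real.exp (l * x) :=
      mul_le_mul_of_nonneg_right hc (Real.exp_pos _).le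
    have h2 : 0 ≤ δ * Real.exp (l * (h - δ)) := by positivity
    linarith
  · have h2 : (h - x) * Real.exp (-(l * (h - x))) ≤ δ * Real.exp (-(l * δ)) :=
      aux_mul_exp_antitone hδ hlδ hc.le
    have key : (h - x) * Real.exp (l * x) ≤ δ * Real.exp (l * (h - δ)) := by
      have h3 := mul_le_mul_of_nonneg_right h2 (Real.exp_pos (l * h)).le
      calc (h - x) * Real.exp (l * x)
          = (h - x) * Real.exp (-(l * (h - x))) * Real.exp (l * h) := by
            rw [mul_assoc, ← Real.exp_add]; congr 2; ring
        _ ≤ δ * Real.exp (-(l * δ)) * Real.exp (l * h) := h3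
        _ = δ * Real.exp (l * (h - δ)) := by
            rw [mul_assoc, ← Real.exp_add]; congr 2; ring
    have h4 : 0 ≤ δ * Real.exp (l * x) := by positivity
    linarith

lemma aux_abs_bound {l h x : ℝ} (hl : 0 < l) (hx : x ≤ h) :
    ‖x * Real.exp (l * x)‖ ≤ Real.exp (l * h) / l + |h| * Real.exp (l * h) := by
  rw [Real.norm_eq_abs, abs_mul, abs_of_pos (Real.exp_pos _)]
  have h1 : |x| ≤ (h - x) + |h| := by
    rcases abs_cases x with ⟨e, _⟩ | ⟨e, _⟩ <;> rcases abs_cases h with ⟨f, _⟩ | ⟨f, _⟩ <;>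
      linarith
  have h2 : (h - x) * Real.exp (l * x) ≤ Real.exp (l * h) / l := by
    have h3 := mul_le_mul_of_nonneg_right (aux_mul_exp_le_inv (u := h - x) hl)
      (Real.exp_pos (l * h)).le
    calc (h - x) * Real.exp (l * x)
        = (h - x) * Real.exp (-(l * (h - x))) * Real.exp (l * h) := by
          rw [mul_assoc, ← Real.exp_add]; congr 2; ring
      _ ≤ 1 / l * Real.exp (l * h) := h3
      _ = Real.exp (l * h) / l := by ring
  have h4 : |h| * Real.exp (l * x) ≤ |h| * Real.exp (l * h) :=
    mul_le_mul_of_nonneg_left (Real.exp_le_exp.2 (mul_le_mul_of_nonneg_left hx hl.le))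
      (abs_nonneg h)
  have h5 : |x| * Real.exp (l * x) ≤ ((h - x) + |h|) * Real.exp (l * x) :=
    mul_le_mul_of_nonneg_right h1 (Real.exp_pos _).le
  nlinarith [Real.exp_pos (l * x)]

/-- **Tilted mean approaches the essential supremum.** If `P(ξ ≤ h) = 1` and
`P(ξ ≥ h − δ) > 0` for every `δ > 0`, then for every `λ > 0` the variables `e^{λξ}` and
`ξ·e^{λξ}` are integrable, and `E[ξ·e^{λξ}]/E[e^{λξ}] → h` as `λ → ∞`. -/
theorem tilted_mean_tendsto_esssup
    {Ω : Type*} [MeasurableSpace Ω] (P : Measure Ω) [IsProbabilityMeasure P]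
    (ξ : Ω → ℝ) (hmeas : Measurable ξ) (h : ℝ)
    (hle : ∀ᵐ ω ∂P, ξ ω ≤ h)
    (hδ : ∀ δ : ℝ, 0 < δ → 0 < P {ω | h - δ ≤ ξ ω}) :
    (∀ l : ℝ, 0 < l →
        Integrable (fun ω => Real.exp (l * ξ ω)) P ∧
          Integrable (fun ω => ξ ω * Real.exp (l * ξ ω)) P)
      ∧ Tendsto
          (fun l : ℝ =>
            (∫ ω, ξ ω * Real.exp (l * ξ ω) ∂P) / ∫ ω, Real.exp (l * ξ ω) ∂P)
          atTop (nhds h) := by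
  have hInt : ∀ l : ℝ, 0 < l →
      Integrable (fun ω => Real.exp (l * ξ ω)) P ∧
        Integrable (fun ω => ξ ω * Real.exp (l * ξ ω)) P := by
    intro l hl
    have hm1 : AEStronglyMeasurable (fun ω => Real.exp (l * ξ ω)) P :=
      (Real.measurable_exp.comp (measurable_const.mul hmeas)).aestronglyMeasurable
    constructor
    · refine Integrable.mono' (integrable_const (Real.exp (l * h))) hm1 ?_
      filter_upwards [hle] with ω hω
      rw [Real.norm_eq_abs, abs_of_pos (Real.exp_pos _)]
      exact Real.exp_le_exp.2 (mul_le_mul_of_nonneg_left hω hl.le)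
    · refine Integrable.mono'
        (integrable_const (Real.exp (l * h) / l + |h| * Real.exp (l * h)))
        (hmeas.aestronglyMeasurable.mul hm1) ?_
      filter_upwards [hle] with ω hω
      exact aux_abs_bound hl hω
  refine ⟨hInt, ?_⟩
  rw [Metric.tendsto_nhds]
  intro ε hε
  set δ := ε / 4 with hδdef
  have hδ0 : 0 < δ := by positivity
  set S := {ω | h - δ / 2 ≤ ξ ω} with hSdef
  have hSm : MeasurableSet S := hmeas measurableSet_Ici
  have hp : 0 < (P S).toReal :=
    ENNReal.toReal_pos (hδ (δ / 2) (by positivity)).ne' (measure_ne_top P S)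
  set p := (P S).toReal with hpdef
  have hev1 : ∀ᶠ l : ℝ in atTop, 1 ≤ l * δ :=
    (eventually_ge_atTop (1 / δ)).mono fun l hl => (div_le_iff₀ hδ0).1 hl
  have hev2 : ∀ᶠ l : ℝ in atTop, Real.exp (-(l * (δ / 2))) ≤ p := by
    have ht : Tendsto (fun l : ℝ => Real.exp (-(l * (δ / 2)))) atTop (nhds 0) := by
      refine Real.tendsto_exp_atBot.comp ?_
      exact tendsto_neg_atTop_atBot.comp (tendsto_id.atTop_mul_const (by positivity))
    exact (ht.eventually_lt_const hp).mono fun l hl => hl.le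
  have hev3 : ∀ᶠ l : ℝ in atTop, (0 : ℝ) < l := eventually_gt_atTop 0
  filter_upwards [hev1, hev2, hev3] with l h1 h2 h3
  obtain ⟨hI_int, hJ_int⟩ := hInt l h3
  set I := ∫ ω, Real.exp (l * ξ ω) ∂P with hIdef
  set J := ∫ ω, ξ ω * Real.exp (l * ξ ω) ∂P with hJdef
  have hIpos : 0 < I := integral_exp_pos hI_int
  have hJle : J ≤ h * I := by
    rw [hJdef, hIdef, ← integral_const_mul]
    refine integral_mono_ae hJ_int (hI_int.const_mul h) ?_
    filter_upwards [hle] with ω hω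
    exact mul_le_mul_of_nonneg_right hω (Real.exp_pos _).le
  have hIlow : Real.exp (l * (h - δ / 2)) * p ≤ I := by
    have e1 : Real.exp (l * (h - δ / 2)) * p = ∫ _ω in S, Real.exp (l * (h - δ / 2)) ∂P := by
      rw [setIntegral_const, smul_eq_mul, mul_comm]; rfl
    have e2 : ∫ _ω in S, Real.exp (l * (h - δ / 2)) ∂P ≤ ∫ ω in S, Real.exp (l * ξ ω) ∂P := by
      refine setIntegral_mono_on (integrableOn_const (measure_ne_top P S))
        hI_int.integrableOn hSm ?_
      intro ω hω
      exact Real.exp_le_exp.2 (mul_le_mul_of_nonneg_left hω h3.le)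
    have e3 : ∫ ω in S, Real.exp (l * ξ ω) ∂P ≤ I :=
      setIntegral_le_integral hI_int (ae_of_all _ fun ω => (Real.exp_pos _).le)
    linarith
  have hN : h * I - J ≤ δ * I + δ * Real.exp (l * (h - δ)) := by
    have hint : Integrable (fun ω => (h - ξ ω) * Real.exp (l * ξ ω)) P := by
      refine ((hI_int.const_mul h).sub hJ_int).congr (ae_of_all _ fun ω => ?_)
      simp only [Pi.sub_apply]; ring
    have e1 : h * I - J = ∫ ω, (h - ξ ω) * Real.exp (l * ξ ω) ∂P := by
      rw [hJdef, hIdef, ← integral_const_mul, ← integral_sub (hI_int.const_mul h) hJ_int]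
      congr 1; funext ω; ring
    have e2 : δ * I + δ * Real.exp (l * (h - δ))
        = ∫ ω, (δ * Real.exp (l * ξ ω) + δ * Real.exp (l * (h - δ))) ∂P := by
      rw [integral_add (hI_int.const_mul δ) (integrable_const _), integral_const_mul,
        integral_const]
      simp; exact Or.inl rfl
    rw [e1, e2]
    refine integral_mono_ae hint ((hI_int.const_mul δ).add (integrable_const _)) ?_
    filter_upwards [hle] with ω hω
    exact aux_pointwise hδ0 h1 hω
  have hterm : δ * Real.exp (l * (h - δ)) ≤ δ * I := by
    have e1 : Real.exp (l * (h - δ)) = Real.exp (-(l * (δ / 2))) * Real.exp (l * (h - δ / 2)) := by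
      rw [← Real.exp_add]; congr 1; ring
    have e2 : Real.exp (l * (h - δ)) ≤ p * Real.exp (l * (h - δ / 2)) := by
      rw [e1]
      exact mul_le_mul_of_nonneg_right h2 (Real.exp_pos _).le
    have e3 : Real.exp (l * (h - δ)) ≤ I := by
      rw [mul_comm] at hIlow; linarith
    exact mul_le_mul_of_nonneg_left e3 hδ0.le
  have hN2 : h * I - J ≤ 2 * δ * I := by linarith
  have hfrac : h - J / I ≤ 2 * δ := by
    have e1 : h - J / I = (h * I - J) / I := by field_simp
    rw [e1, div_le_iff₀ hIpos]
    linarith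
  have hJIle : J / I ≤ h := (div_le_iff₀ hIpos).2 (by linarith)
  rw [Real.dist_eq, abs_of_nonpos (by linarith)]
  have : 2 * δ = ε / 2 := by rw [hδdef]; ring
  linarith
end

section
/- (Crossing points of the two-point line with the curve x₁ = z·x₂^{1/p}) Let f(q) < z < 1. (i) If a < 0, then there is exactly one t ∈ (0,1) with f(t) = z, and it satisfies t > q. (ii) If a > 0, then there are exactly two points t_−, t_+ with 0 < t_− < t_+ < 1 and f(t_−) = f(t_+) = z, and they satisfy t_− < q < t_+. (iii) If a = 0, then t = z^{p/(p−1)} is the unique solution of f(t) = z in (0,1), and it satisfies t > q. -/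
open Real Set

private lemma rpow_base_inj {x y p : ℝ} (hx : 0 ≤ x) (hy : 0 ≤ y) (hp : 0 < p)
    (h : x ^ p = y ^ p) : x = y := by
  rcases lt_trichotomy x y with h' | h' | h'
  · exact absurd h (ne_of_lt (Real.rpow_lt_rpow hx h' hp))
  · exact h'
  · exact absurd h (ne_of_gt (Real.rpow_lt_rpow hy h' hp))

private lemma cross_eq_iff {p Nv Dv z : ℝ} (hp : 0 < p) (hN : 0 ≤ Nv) (hD : 0 < Dv) (hz : 0 ≤ z) :
    Nv / Dv ^ (1 / p) = z ↔ Nv ^ p = z ^ p * Dv := by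
  have hDr : 0 < Dv ^ (1 / p) := Real.rpow_pos_of_pos hD _
  have hroot : (Dv ^ (1 / p)) ^ p = Dv := by
    rw [← Real.rpow_mul hD.le, one_div_mul_cancel (ne_of_gt hp), Real.rpow_one]
  rw [div_eq_iff hDr.ne']
  constructor
  · intro h
    rw [h, Real.mul_rpow hz (Real.rpow_nonneg hD.le _), hroot]
  · intro h
    refine rpow_base_inj hN (mul_nonneg hz hDr.le) hp ?_
    rw [Real.mul_rpow hz hDr.le, hroot, h]

private lemma cross_lt_iff {p Nv Dv z : ℝ} (hp : 0 < p) (hN : 0 ≤ Nv) (hD : 0 < Dv) (hz : 0 ≤ z) :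
    Nv / Dv ^ (1 / p) < z ↔ Nv ^ p < z ^ p * Dv := by
  have hDr : 0 < Dv ^ (1 / p) := Real.rpow_pos_of_pos hD _
  have hroot : (Dv ^ (1 / p)) ^ p = Dv := by
    rw [← Real.rpow_mul hD.le, one_div_mul_cancel (ne_of_gt hp), Real.rpow_one]
  rw [div_lt_iff₀ hDr, ← Real.rpow_lt_rpow_iff hN (mul_nonneg hz hDr.le) hp,
    Real.mul_rpow hz hDr.le, hroot]

private lemma sc_affine {p c d : ℝ} (hp : 1 < p) (hd : d ≠ 0) {s : Set ℝ}
    (hs : Convex ℝ s) (h : ∀ x ∈ s, 0 ≤ c + x * d) :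
    StrictConvexOn ℝ s (fun x => (c + x * d) ^ p) := by
  refine ⟨hs, ?_⟩
  intro x hx y hy hxy la mu hla hmu hlm
  have hNx : (0 : ℝ) ≤ c + x * d := h x hx
  have hNy : (0 : ℝ) ≤ c + y * d := h y hy
  have hNxy : c + x * d ≠ c + y * d := by
    intro hEq
    exact hxy (mul_right_cancel₀ hd (by linarith))
  have key := (strictConvexOn_rpow hp).2 (Set.mem_Ici.2 hNx) (Set.mem_Ici.2 hNy) hNxy hla hmu hlm
  simp only [smul_eq_mul] at key ⊢
  have harg : c + (la * x + mu * y) * d = la * (c + x * d) + mu * (c + y * d) := by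
    linear_combination (-c) * hlm
  rw [harg]
  exact key

private lemma sc_g {p c d e f' : ℝ} (hp : 1 < p) (hd : d ≠ 0) {u v : ℝ}
    (h : ∀ x ∈ Icc u v, 0 ≤ c + x * d) :
    StrictConvexOn ℝ (Icc u v) (fun x => (c + x * d) ^ p - (e + x * f')) := by
  refine ⟨convex_Icc u v, ?_⟩
  intro x hx y hy hxy la mu hla hmu hlm
  have key := (sc_affine hp hd (convex_Icc u v) h).2 hx hy hxy hla hmu hlm
  simp only [smul_eq_mul] at key ⊢
  have haff : e + (la * x + mu * y) * f' = la * (e + x * f') + mu * (e + y * f') := by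
    linear_combination (-e) * hlm
  linarith [key]

private lemma scx_neg {g : ℝ → ℝ} {s : Set ℝ} (hg : StrictConvexOn ℝ s g)
    {x y z : ℝ} (hx : x ∈ s) (hz : z ∈ s) (h1 : x < y) (h2 : y < z)
    (hgx : g x ≤ 0) (hgz : g z ≤ 0) : g y < 0 := by
  have hzx : 0 < z - x := by linarith
  set la := (z - y) / (z - x) with hla_def
  set mu := (y - x) / (z - x) with hmu_def
  have hla : 0 < la := div_pos (by linarith) hzx
  have hmu : 0 < mu := div_pos (by linarith) hzx
  have hlm : la + mu = 1 := by
    rw [hla_def, hmu_def, ← add_div, div_eq_one_iff_eq hzx.ne']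
    ring
  have hy' : la • x + mu • z = y := by
    simp only [smul_eq_mul, hla_def, hmu_def]
    field_simp
    ring
  have key := hg.2 hx hz (ne_of_lt (h1.trans h2)) hla hmu hlm
  rw [hy'] at key
  simp only [smul_eq_mul] at key
  nlinarith

private lemma root_pos {g : ℝ → ℝ} {u v : ℝ} (huv : u < v)
    (hg : StrictConvexOn ℝ (Icc u v) g) (hc : ContinuousOn g (Icc u v))
    (hu : g u < 0) (hv : 0 < g v) :
    ∃ t ∈ Ioo u v, g t = 0 ∧ (∀ s ∈ Icc u v, s < t → g s < 0) ∧
      (∀ s ∈ Icc u v, t < s → 0 < g s) := by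
  obtain ⟨t, ht, hgt⟩ := intermediate_value_Ioo huv.le hc (Set.mem_Ioo.2 ⟨hu, hv⟩)
  have htm : t ∈ Icc u v := Ioo_subset_Icc_self ht
  refine ⟨t, ht, hgt, ?_, ?_⟩
  · intro s hs hst
    rcases eq_or_lt_of_le hs.1 with h | h
    · rwa [← h]
    · exact scx_neg hg (left_mem_Icc.2 huv.le) htm h hst hu.le hgt.le
  · intro s hs hts
    by_contra hle
    push_neg at hle
    have : g t < 0 := scx_neg hg (left_mem_Icc.2 huv.le) hs ht.1 hts hu.le hle
    exact absurd hgt this.ne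

private lemma root_neg {g : ℝ → ℝ} {u v : ℝ} (huv : u < v)
    (hg : StrictConvexOn ℝ (Icc u v) g) (hc : ContinuousOn g (Icc u v))
    (hu : 0 < g u) (hv : g v < 0) :
    ∃ t ∈ Ioo u v, g t = 0 ∧ (∀ s ∈ Icc u v, s < t → 0 < g s) ∧
      (∀ s ∈ Icc u v, t < s → g s < 0) := by
  obtain ⟨t, ht, hgt⟩ := intermediate_value_Ioo' huv.le hc (Set.mem_Ioo.2 ⟨hv, hu⟩)
  have htm : t ∈ Icc u v := Ioo_subset_Icc_self ht
  refine ⟨t, ht, hgt, ?_, ?_⟩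
  · intro s hs hst
    by_contra hle
    push_neg at hle
    have : g t < 0 := scx_neg hg hs (right_mem_Icc.2 huv.le) hst ht.2 hle hv.le
    exact absurd hgt this.ne
  · intro s hs hts
    rcases eq_or_lt_of_le hs.2 with h | h
    · rwa [h]
    · exact scx_neg hg htm (right_mem_Icc.2 huv.le) hts h hgt.le hv.le


/-- The function `f(t) = (a + t(b−a)) / (|a|^p + t(b^p − |a|^p))^{1/p}`, giving the value of
the self-normalized ratio along the segment joining `(a,|a|^p)` to `(b,b^p)`.
(With Lean's conventions `0/0 = 0`, this also gives `f(0) = a/|a|` for `a ≠ 0` and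
`f(0) = 0` for `a = 0`.) -/
noncomputable def crossFn (p a b t : ℝ) : ℝ :=
  (a + t * (b - a)) / (|a| ^ p + t * (b ^ p - |a| ^ p)) ^ (1 / p)

set_option maxHeartbeats 2000000

/-- **Crossing points of the two-point line with the curve `x₁ = z·x₂^{1/p}`.**
Let `f(q) < z < 1`. (i) If `a < 0` there is exactly one `t ∈ (0,1)` with `f(t) = z`, and
`t > q`. (ii) If `a > 0` there are exactly two such points `t₋ < t₊`, with `t₋ < q < t₊`.
(iii) If `a = 0` then `t = z^{p/(p−1)}` is the unique solution in `(0,1)`, and `t > q`. -/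
theorem crossing_points_two_point_case
    (p a b q z : ℝ) (hp : 1 < p) (hab : a < b) (hb : 0 < b)
    (hq : q ∈ Set.Ioo (0 : ℝ) 1)
    (hz1 : crossFn p a b q < z) (hz2 : z < 1) :
    (a < 0 → ∃ t : ℝ,
        {s ∈ Set.Ioo (0 : ℝ) 1 | crossFn p a b s = z} = {t} ∧ q < t)
      ∧ (0 < a → ∃ t₁ t₂ : ℝ, t₁ < t₂ ∧
          {s ∈ Set.Ioo (0 : ℝ) 1 | crossFn p a b s = z} = {t₁, t₂} ∧ t₁ < q ∧ q < t₂)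
      ∧ (a = 0 →
          {s ∈ Set.Ioo (0 : ℝ) 1 | crossFn p a b s = z} = {z ^ (p / (p - 1))}
            ∧ q < z ^ (p / (p - 1))) := by
  obtain ⟨hq0, hq1⟩ := hq
  have hp0 : (0 : ℝ) < p := lt_trans zero_lt_one hp
  have hpne : p ≠ 0 := ne_of_gt hp0
  have hba : (0 : ℝ) < b - a := sub_pos.2 hab
  have hbp : 0 < b ^ p := Real.rpow_pos_of_pos hb p
  refine ⟨?_, ?_, ?_⟩
  · -- case a < 0
    intro ha
    have habs : |a| = -a := abs_of_neg ha
    have hap : 0 < |a| ^ p := Real.rpow_pos_of_pos (by rw [habs]; linarith) p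
    have hDpos : ∀ s ∈ Icc (0 : ℝ) 1, 0 < |a| ^ p + s * (b ^ p - |a| ^ p) := by
      intro s hs
      have h1 : |a| ^ p + s * (b ^ p - |a| ^ p) = (1 - s) * |a| ^ p + s * b ^ p := by ring
      rw [h1]
      rcases eq_or_lt_of_le hs.1 with h0 | h0
      · rw [← h0]; simpa using hap
      · nlinarith [mul_pos h0 hbp, mul_nonneg (by linarith [hs.2] : (0 : ℝ) ≤ 1 - s) hap.le]
    obtain ⟨r, hrdef⟩ : ∃ r : ℝ, r = (-a) / (b - a) := ⟨_, rfl⟩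
    have hr0 : 0 < r := by rw [hrdef]; exact div_pos (by linarith) hba
    have hr1 : r < 1 := by rw [hrdef]; exact (div_lt_one hba).2 (by linarith)
    have hNr : a + r * (b - a) = 0 := by
      rw [hrdef]; field_simp; ring
    have hDq := hDpos q ⟨hq0.le, hq1.le⟩
    have hDqr : 0 < (|a| ^ p + q * (b ^ p - |a| ^ p)) ^ (1 / p) := Real.rpow_pos_of_pos hDq _
    have hz1' : (a + q * (b - a)) / (|a| ^ p + q * (b ^ p - |a| ^ p)) ^ (1 / p) < z := hz1
    rcases lt_trichotomy z 0 with hzneg | hzzero | hzpos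
    · -- z < 0
      have hNq : a + q * (b - a) < 0 := by
        by_contra hge
        push_neg at hge
        have h2 : (0 : ℝ) ≤ (a + q * (b - a)) / (|a| ^ p + q * (b ^ p - |a| ^ p)) ^ (1 / p) :=
          div_nonneg hge hDqr.le
        linarith
      have hqr : q < r := by
        rw [hrdef, lt_div_iff₀ hba]; linarith
      have hzn0 : 0 < -z := by linarith
      -- show z > -1
      have htri : -(a + q * (b - a)) ≤ (1 - q) * (-a) + q * b := by
        nlinarith [mul_pos hq0 hb]
      have hcvx := (convexOn_rpow hp.le).2 (Set.mem_Ici.2 (by linarith : (0 : ℝ) ≤ -a))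
        (Set.mem_Ici.2 hb.le) (by linarith : (0 : ℝ) ≤ 1 - q) hq0.le (by ring)
      simp only [smul_eq_mul] at hcvx
      have hstep : (-(a + q * (b - a))) ^ p ≤ |a| ^ p + q * (b ^ p - |a| ^ p) := by
        have h1 : (-(a + q * (b - a))) ^ p ≤ ((1 - q) * (-a) + q * b) ^ p :=
          Real.rpow_le_rpow (by linarith) htri hp0.le
        have h2 : (1 - q) * (-a) ^ p + q * b ^ p = |a| ^ p + q * (b ^ p - |a| ^ p) := by
          rw [habs]; ring
        calc (-(a + q * (b - a))) ^ p ≤ ((1 - q) * (-a) + q * b) ^ p := h1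
          _ ≤ (1 - q) * (-a) ^ p + q * b ^ p := hcvx
          _ = |a| ^ p + q * (b ^ p - |a| ^ p) := h2
      have hfq_ge : -((|a| ^ p + q * (b ^ p - |a| ^ p)) ^ (1 / p)) ≤ a + q * (b - a) := by
        by_contra hlt
        push_neg at hlt
        have h3 : ((|a| ^ p + q * (b ^ p - |a| ^ p)) ^ (1 / p)) ^ p < (-(a + q * (b - a))) ^ p :=
          Real.rpow_lt_rpow hDqr.le (by linarith) hp0
        rw [← Real.rpow_mul hDq.le, one_div_mul_cancel hpne, Real.rpow_one] at h3
        linarith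
      have hz_gt : -1 < z := by
        have h4 : (-1 : ℝ) ≤ (a + q * (b - a)) / (|a| ^ p + q * (b ^ p - |a| ^ p)) ^ (1 / p) := by
          rw [le_div_iff₀ hDqr]
          linarith
        linarith
      have hmz1 : (-z) ^ p < 1 := Real.rpow_lt_one hzn0.le (by linarith) hp0
      have hmzp : 0 < (-z) ^ p := Real.rpow_pos_of_pos hzn0 p
      have hMnn : ∀ x ∈ Icc (0 : ℝ) r, 0 ≤ -a + x * (a - b) := by
        intro x hx
        nlinarith [mul_nonneg (sub_nonneg.2 hx.2) hba.le]
      set gm : ℝ → ℝ := fun s =>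
        (-a + s * (a - b)) ^ p - ((-z) ^ p * |a| ^ p + s * ((-z) ^ p * (b ^ p - |a| ^ p))) with hgmdef
      have hgmsc : StrictConvexOn ℝ (Icc 0 r) gm :=
        sc_g hp (by intro h0; nlinarith : a - b ≠ 0) hMnn
      have hgmcont : Continuous gm := by
        simp only [hgmdef]
        exact ((continuous_const.add (continuous_id.mul continuous_const)).rpow_const
          (fun x => Or.inr hp0.le)).sub (continuous_const.add (continuous_id.mul continuous_const))
      have hgm0 : 0 < gm 0 := by
        simp only [hgmdef, zero_mul, add_zero]
        rw [habs] at hap ⊢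
        nlinarith [mul_pos hap (show (0 : ℝ) < 1 - (-z) ^ p by linarith)]
      have hgmr : gm r < 0 := by
        have e1 : -a + r * (a - b) = 0 := by linear_combination -hNr
        simp only [hgmdef]
        rw [e1, Real.zero_rpow hpne]
        nlinarith [mul_pos hmzp (hDpos r ⟨hr0.le, hr1.le⟩)]
      obtain ⟨t, htm, hgt, hposb, hnega⟩ := root_neg hr0 hgmsc hgmcont.continuousOn hgm0 hgmr
      have hgmq : 0 < gm q := by
        have h1 : a + q * (b - a) < z * ((|a| ^ p + q * (b ^ p - |a| ^ p)) ^ (1 / p)) :=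
          (div_lt_iff₀ hDqr).1 hz1'
        have h2 : (-z) * ((|a| ^ p + q * (b ^ p - |a| ^ p)) ^ (1 / p)) < -(a + q * (b - a)) := by
          linarith
        have h3 : ((-z) * ((|a| ^ p + q * (b ^ p - |a| ^ p)) ^ (1 / p))) ^ p
            < (-(a + q * (b - a))) ^ p :=
          Real.rpow_lt_rpow (mul_nonneg hzn0.le hDqr.le) h2 hp0
        rw [Real.mul_rpow hzn0.le hDqr.le, ← Real.rpow_mul hDq.le, one_div_mul_cancel hpne,
          Real.rpow_one] at h3
        have e2 : -(a + q * (b - a)) = -a + q * (a - b) := by ring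
        rw [e2] at h3
        have e3 : (-z) ^ p * (|a| ^ p + q * (b ^ p - |a| ^ p))
            = (-z) ^ p * |a| ^ p + q * ((-z) ^ p * (b ^ p - |a| ^ p)) := by ring
        simp only [hgmdef]
        linarith [h3, e3.le, e3.ge]
      have hqt : q < t := by
        rcases lt_trichotomy q t with h | h | h
        · exact h
        · exfalso; rw [h] at hgmq; linarith [hgt]
        · exact absurd (hnega q ⟨hq0.le, hqr.le⟩ h) (by linarith)
      refine ⟨t, ?_, hqt⟩
      ext s
      simp only [Set.mem_setOf_eq, Set.mem_singleton_iff, Set.mem_Ioo]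
      constructor
      · rintro ⟨⟨hs0, hs1⟩, hfs⟩
        have hDs := hDpos s ⟨hs0.le, hs1.le⟩
        have hDsr : 0 < (|a| ^ p + s * (b ^ p - |a| ^ p)) ^ (1 / p) := Real.rpow_pos_of_pos hDs _
        have hfs' : (a + s * (b - a)) / (|a| ^ p + s * (b ^ p - |a| ^ p)) ^ (1 / p) = z := hfs
        have hNs : a + s * (b - a) < 0 := by
          have h5 : a + s * (b - a) = z * ((|a| ^ p + s * (b ^ p - |a| ^ p)) ^ (1 / p)) :=
            (div_eq_iff hDsr.ne').1 hfs'
          rw [h5]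
          exact mul_neg_of_neg_of_pos hzneg hDsr
        have hsr : s < r := by
          rw [hrdef, lt_div_iff₀ hba]; linarith
        have hfs'' : (-(a + s * (b - a))) / (|a| ^ p + s * (b ^ p - |a| ^ p)) ^ (1 / p) = -z := by
          rw [neg_div, hfs']
        have hhs0 : (-(a + s * (b - a))) ^ p = (-z) ^ p * (|a| ^ p + s * (b ^ p - |a| ^ p)) :=
          (cross_eq_iff hp0 (by linarith) hDs hzn0.le).1 hfs''
        have hhs : gm s = 0 := by
          have e2 : -a + s * (a - b) = -(a + s * (b - a)) := by ring
          simp only [hgmdef]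
          rw [e2, hhs0]
          ring
        rcases lt_trichotomy s t with h | h | h
        · exact absurd hhs (ne_of_gt (hposb s ⟨hs0.le, hsr.le⟩ h))
        · exact h
        · exact absurd hhs (ne_of_lt (hnega s ⟨hs0.le, hsr.le⟩ h))
      · intro hs
        rw [hs]
        have hts1 : t < 1 := lt_trans htm.2 hr1
        refine ⟨⟨htm.1, hts1⟩, ?_⟩
        have hDt := hDpos t ⟨htm.1.le, hts1.le⟩
        have hMt : 0 ≤ -a + t * (a - b) := hMnn t ⟨htm.1.le, htm.2.le⟩
        have hht' : (-a + t * (a - b)) ^ p = (-z) ^ p * (|a| ^ p + t * (b ^ p - |a| ^ p)) := by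
          have h0 := hgt
          simp only [hgmdef] at h0
          linear_combination h0
        have h6 := (cross_eq_iff hp0 hMt hDt hzn0.le).2 hht'
        have e2 : -a + t * (a - b) = -(a + t * (b - a)) := by ring
        rw [e2, neg_div] at h6
        have h7 : (a + t * (b - a)) / (|a| ^ p + t * (b ^ p - |a| ^ p)) ^ (1 / p) = z :=
          neg_injective h6
        exact h7
    · -- z = 0
      subst hzzero
      have hNq : a + q * (b - a) < 0 := by
        by_contra hge
        push_neg at hge
        exact absurd hz1' (not_lt.2 (div_nonneg hge hDqr.le))
      have hqr : q < r := by
        rw [hrdef, lt_div_iff₀ hba]; linarith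
      refine ⟨r, ?_, hqr⟩
      ext s
      simp only [Set.mem_setOf_eq, Set.mem_singleton_iff, Set.mem_Ioo]
      constructor
      · rintro ⟨⟨hs0, hs1⟩, hfs⟩
        have hDsr : 0 < (|a| ^ p + s * (b ^ p - |a| ^ p)) ^ (1 / p) :=
          Real.rpow_pos_of_pos (hDpos s ⟨hs0.le, hs1.le⟩) _
        have hfs' : (a + s * (b - a)) / (|a| ^ p + s * (b ^ p - |a| ^ p)) ^ (1 / p) = 0 := hfs
        have hNs : a + s * (b - a) = 0 := by
          rcases div_eq_zero_iff.1 hfs' with h | h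
          · exact h
          · exact absurd h hDsr.ne'
        rw [hrdef, eq_div_iff hba.ne']
        linarith
      · intro hs
        rw [hs]
        refine ⟨⟨hr0, hr1⟩, ?_⟩
        show (a + r * (b - a)) / (|a| ^ p + r * (b ^ p - |a| ^ p)) ^ (1 / p) = 0
        rw [hNr, zero_div]
    · -- z > 0
      have hzp1 : z ^ p < 1 := Real.rpow_lt_one hzpos.le hz2 hp0
      have hzp0 : 0 < z ^ p := Real.rpow_pos_of_pos hzpos p
      have hNnn : ∀ x ∈ Icc r 1, 0 ≤ a + x * (b - a) := by
        intro x hx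
        nlinarith [mul_nonneg (sub_nonneg.2 hx.1) hba.le, hNr]
      set g : ℝ → ℝ := fun s =>
        (a + s * (b - a)) ^ p - (z ^ p * |a| ^ p + s * (z ^ p * (b ^ p - |a| ^ p))) with hgdef
      have hgsc : StrictConvexOn ℝ (Icc r 1) g := sc_g hp hba.ne' hNnn
      have hgcont : Continuous g := by
        simp only [hgdef]
        exact ((continuous_const.add (continuous_id.mul continuous_const)).rpow_const
          (fun x => Or.inr hp0.le)).sub (continuous_const.add (continuous_id.mul continuous_const))
      have hgr : g r < 0 := by
        simp only [hgdef]
        rw [hNr, Real.zero_rpow hpne]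
        nlinarith [mul_pos hzp0 (hDpos r ⟨hr0.le, hr1.le⟩)]
      have hg1 : 0 < g 1 := by
        have e1 : a + (b - a) = b := by ring
        simp only [hgdef, one_mul, e1]
        nlinarith [mul_pos hbp (show (0 : ℝ) < 1 - z ^ p by linarith), hap]
      obtain ⟨t, htm, hgt, hnegb, hposa⟩ := root_pos hr1 hgsc hgcont.continuousOn hgr hg1
      have hqt : q < t := by
        rcases le_or_gt q r with h | h
        · exact lt_of_le_of_lt h htm.1
        · have hNq : 0 < a + q * (b - a) := by
            nlinarith [mul_pos (sub_pos.2 h) hba, hNr]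
          have hgq : g q < 0 := by
            have h1 : (a + q * (b - a)) ^ p < z ^ p * (|a| ^ p + q * (b ^ p - |a| ^ p)) :=
              (cross_lt_iff hp0 hNq.le hDq hzpos.le).1 hz1
            have e3 : z ^ p * (|a| ^ p + q * (b ^ p - |a| ^ p))
                = z ^ p * |a| ^ p + q * (z ^ p * (b ^ p - |a| ^ p)) := by ring
            simp only [hgdef]
            linarith [h1, e3.le, e3.ge]
          rcases lt_trichotomy q t with h' | h' | h'
          · exact h'
          · exfalso; rw [h'] at hgq; linarith [hgt]
          · exact absurd (hposa q ⟨h.le, hq1.le⟩ h') (by linarith)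
      refine ⟨t, ?_, hqt⟩
      ext s
      simp only [Set.mem_setOf_eq, Set.mem_singleton_iff, Set.mem_Ioo]
      constructor
      · rintro ⟨⟨hs0, hs1⟩, hfs⟩
        have hDs := hDpos s ⟨hs0.le, hs1.le⟩
        have hDsr : 0 < (|a| ^ p + s * (b ^ p - |a| ^ p)) ^ (1 / p) := Real.rpow_pos_of_pos hDs _
        have hfs' : (a + s * (b - a)) / (|a| ^ p + s * (b ^ p - |a| ^ p)) ^ (1 / p) = z := hfs
        have hNs : 0 < a + s * (b - a) := by
          have h5 : a + s * (b - a) = z * ((|a| ^ p + s * (b ^ p - |a| ^ p)) ^ (1 / p)) :=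
            (div_eq_iff hDsr.ne').1 hfs'
          rw [h5]
          exact mul_pos hzpos hDsr
        have hrs : r ≤ s := by
          by_contra hlt
          push_neg at hlt
          nlinarith [mul_pos (sub_pos.2 hlt) hba, hNr]
        have hgs : g s = 0 := by
          have h1 : (a + s * (b - a)) ^ p = z ^ p * (|a| ^ p + s * (b ^ p - |a| ^ p)) :=
            (cross_eq_iff hp0 hNs.le hDs hzpos.le).1 hfs'
          simp only [hgdef]
          linear_combination h1
        rcases lt_trichotomy s t with h | h | h
        · exact absurd hgs (ne_of_lt (hnegb s ⟨hrs, hs1.le⟩ h))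
        · exact h
        · exact absurd hgs (ne_of_gt (hposa s ⟨hrs, hs1.le⟩ h))
      · intro hs
        rw [hs]
        refine ⟨⟨lt_trans hr0 htm.1, htm.2⟩, ?_⟩
        have hDt := hDpos t ⟨(lt_trans hr0 htm.1).le, htm.2.le⟩
        have hNt : 0 ≤ a + t * (b - a) := hNnn t ⟨htm.1.le, htm.2.le⟩
        have h1 : (a + t * (b - a)) ^ p = z ^ p * (|a| ^ p + t * (b ^ p - |a| ^ p)) := by
          have h0 := hgt
          simp only [hgdef] at h0
          linear_combination h0
        exact (cross_eq_iff hp0 hNt hDt hzpos.le).2 h1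
  · -- case 0 < a
    intro ha
    have habs : |a| = a := abs_of_pos ha
    have hap : 0 < a ^ p := Real.rpow_pos_of_pos ha p
    have hDpos : ∀ s ∈ Icc (0 : ℝ) 1, 0 < |a| ^ p + s * (b ^ p - |a| ^ p) := by
      intro s hs
      have h1 : |a| ^ p + s * (b ^ p - |a| ^ p) = (1 - s) * |a| ^ p + s * b ^ p := by ring
      rw [h1, habs]
      rcases eq_or_lt_of_le hs.1 with h0 | h0
      · rw [← h0]; simpa using hap
      · nlinarith [mul_pos h0 hbp, mul_nonneg (by linarith [hs.2] : (0 : ℝ) ≤ 1 - s) hap.le]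
    have hNpos : ∀ s ∈ Icc (0 : ℝ) 1, 0 < a + s * (b - a) := by
      intro s hs; nlinarith [hs.1, hs.2]
    have hNq := hNpos q ⟨hq0.le, hq1.le⟩
    have hDq := hDpos q ⟨hq0.le, hq1.le⟩
    have hDqr : 0 < (|a| ^ p + q * (b ^ p - |a| ^ p)) ^ (1 / p) := Real.rpow_pos_of_pos hDq _
    have hfqpos : (0 : ℝ) < crossFn p a b q := div_pos hNq hDqr
    have hz0 : 0 < z := lt_trans hfqpos hz1
    have hzp1 : z ^ p < 1 := Real.rpow_lt_one hz0.le hz2 hp0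
    set g : ℝ → ℝ := fun s =>
      (a + s * (b - a)) ^ p - (z ^ p * |a| ^ p + s * (z ^ p * (b ^ p - |a| ^ p))) with hgdef
    have hgsc : StrictConvexOn ℝ (Icc (0 : ℝ) 1) g :=
      sc_g hp hba.ne' (fun x hx => (hNpos x hx).le)
    have hgcont : Continuous g := by
      simp only [hgdef]
      exact ((continuous_const.add (continuous_id.mul continuous_const)).rpow_const
        (fun x => Or.inr hp0.le)).sub (continuous_const.add (continuous_id.mul continuous_const))
    have hg0 : 0 < g 0 := by
      simp only [hgdef, zero_mul, add_zero]
      rw [habs]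
      nlinarith [mul_pos hap (show (0 : ℝ) < 1 - z ^ p by linarith)]
    have hg1 : 0 < g 1 := by
      have e1 : a + (b - a) = b := by ring
      simp only [hgdef, one_mul, e1]
      rw [habs]
      nlinarith [mul_pos hbp (show (0 : ℝ) < 1 - z ^ p by linarith)]
    have hgq : g q < 0 := by
      have h1 : (a + q * (b - a)) ^ p < z ^ p * (|a| ^ p + q * (b ^ p - |a| ^ p)) :=
        (cross_lt_iff hp0 hNq.le hDq hz0.le).1 hz1
      have e : z ^ p * (|a| ^ p + q * (b ^ p - |a| ^ p))
          = z ^ p * |a| ^ p + q * (z ^ p * (b ^ p - |a| ^ p)) := by ring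
      simp only [hgdef]
      linarith [h1, e.le, e.ge]
    obtain ⟨t₁, ht₁m, hgt₁, hpos₁, hneg₁⟩ :=
      root_neg hq0 (hgsc.subset (Icc_subset_Icc_right hq1.le) (convex_Icc _ _))
        hgcont.continuousOn hg0 hgq
    obtain ⟨t₂, ht₂m, hgt₂, hneg₂, hpos₂⟩ :=
      root_pos hq1 (hgsc.subset (Icc_subset_Icc_left hq0.le) (convex_Icc _ _))
        hgcont.continuousOn hgq hg1
    refine ⟨t₁, t₂, lt_trans ht₁m.2 ht₂m.1, ?_, ht₁m.2, ht₂m.1⟩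
    ext s
    simp only [Set.mem_setOf_eq, Set.mem_insert_iff, Set.mem_singleton_iff, Set.mem_Ioo]
    constructor
    · rintro ⟨⟨hs0, hs1⟩, hfs⟩
      have hgs : g s = 0 := by
        have h1 : (a + s * (b - a)) ^ p = z ^ p * (|a| ^ p + s * (b ^ p - |a| ^ p)) :=
          (cross_eq_iff hp0 (hNpos s ⟨hs0.le, hs1.le⟩).le (hDpos s ⟨hs0.le, hs1.le⟩) hz0.le).1 hfs
        simp only [hgdef]
        linear_combination h1
      rcases le_or_gt s q with hsq | hsq
      · left
        rcases lt_trichotomy s t₁ with h | h | h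
        · exact absurd hgs (ne_of_gt (hpos₁ s ⟨hs0.le, hsq⟩ h))
        · exact h
        · exact absurd hgs (ne_of_lt (hneg₁ s ⟨hs0.le, hsq⟩ h))
      · right
        rcases lt_trichotomy s t₂ with h | h | h
        · exact absurd hgs (ne_of_lt (hneg₂ s ⟨hsq.le, hs1.le⟩ h))
        · exact h
        · exact absurd hgs (ne_of_gt (hpos₂ s ⟨hsq.le, hs1.le⟩ h))
    · intro hs
      have key : ∀ t ∈ Ioo (0 : ℝ) 1, g t = 0 → (t ∈ Ioo (0 : ℝ) 1 ∧ crossFn p a b t = z) := by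
        intro t htm hgt
        refine ⟨htm, ?_⟩
        have h1 : (a + t * (b - a)) ^ p = z ^ p * (|a| ^ p + t * (b ^ p - |a| ^ p)) := by
          have h0 := hgt
          simp only [hgdef] at h0
          linear_combination h0
        exact (cross_eq_iff hp0 (hNpos t ⟨htm.1.le, htm.2.le⟩).le
          (hDpos t ⟨htm.1.le, htm.2.le⟩) hz0.le).2 h1
      rcases hs with rfl | rfl
      · exact key s ⟨ht₁m.1, lt_trans ht₁m.2 hq1⟩ hgt₁
      · exact key s ⟨lt_trans hq0 ht₂m.1, ht₂m.2⟩ hgt₂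
  · -- case a = 0
    intro ha
    subst ha
    have hc0 : (0 : ℝ) < 1 - 1 / p := by
      have : 1 / p < 1 := by rw [div_lt_one hp0]; exact hp
      linarith
    set c : ℝ := 1 - 1 / p with hcdef
    have hcn : c ≠ 0 := ne_of_gt hc0
    have hval : ∀ s : ℝ, 0 < s → crossFn p 0 b s = s ^ c := by
      intro s hs
      unfold crossFn
      simp only [abs_zero, Real.zero_rpow hpne, zero_add, sub_zero]
      rw [div_eq_iff (ne_of_gt (Real.rpow_pos_of_pos (mul_pos hs hbp) _))]
      rw [Real.mul_rpow hs.le hbp.le, ← Real.rpow_mul hb.le, mul_one_div_cancel hpne,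
        Real.rpow_one, ← mul_assoc, ← Real.rpow_add hs]
      have e : c + 1 / p = 1 := by rw [hcdef]; ring
      rw [e, Real.rpow_one]
    have hfq : crossFn p 0 b q = q ^ c := hval q hq0
    have hqc : (0 : ℝ) < q ^ c := Real.rpow_pos_of_pos hq0 c
    have hz0 : 0 < z := by
      rw [hfq] at hz1
      linarith
    have hcp : c = (p - 1) / p := by rw [hcdef]; field_simp
    have hexp : p / (p - 1) = 1 / c := by rw [hcp, one_div_div]
    have htc : (z ^ (p / (p - 1))) ^ c = z := by
      rw [hexp, ← Real.rpow_mul hz0.le, one_div_mul_cancel hcn, Real.rpow_one]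
    have ht0 : 0 < z ^ (p / (p - 1)) := Real.rpow_pos_of_pos hz0 _
    have ht1 : z ^ (p / (p - 1)) < 1 := by
      refine Real.rpow_lt_one hz0.le hz2 ?_
      rw [hexp]
      positivity
    have hqt : q < z ^ (p / (p - 1)) := by
      by_contra hle
      push_neg at hle
      have h2 := Real.rpow_le_rpow ht0.le hle hc0.le
      rw [htc] at h2
      rw [hfq] at hz1
      linarith
    refine ⟨?_, hqt⟩
    ext s
    simp only [Set.mem_setOf_eq, Set.mem_singleton_iff, Set.mem_Ioo]
    constructor
    · rintro ⟨⟨hs0, hs1⟩, hfs⟩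
      rw [hval s hs0] at hfs
      have h3 : (s ^ c) ^ (1 / c) = s := by
        rw [← Real.rpow_mul hs0.le, mul_one_div_cancel hcn, Real.rpow_one]
      rw [hexp, ← hfs, h3]
    · rintro rfl
      exact ⟨⟨ht0, ht1⟩, by rw [hval _ ht0, htc]⟩
end

section
/- (Event identity, two-point case with a < 0) Let a < 0 < b, let z ∈ (f(q), 1), and let t_z ∈ (0,1) be the unique solution of f(t) = z. Then for every n ≥ 1 the events A_n(z) and {N_n ≥ t_z·n} coincide (as subsets of the sample space). -/
open MeasureTheory ProbabilityTheory Real Set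
open scoped ENNReal Classical

lemma den_pos {p a b : ℝ} (ha : a < 0) (hb : 0 < b) (t : ℝ) (ht : t ∈ Icc (0:ℝ) 1) :
    0 < |a| ^ p + t * (b ^ p - |a| ^ p) := by
  have h1 : (0:ℝ) < |a| ^ p := rpow_pos_of_pos (abs_pos.mpr ha.ne) p
  have h2 : (0:ℝ) < b ^ p := rpow_pos_of_pos hb p
  obtain ⟨ht0, ht1⟩ := ht
  nlinarith [mul_nonneg ht0 h2.le, mul_nonneg (sub_nonneg.mpr ht1) h1.le]

lemma rpowOneDiv {x p : ℝ} (hx : 0 ≤ x) (hp : p ≠ 0) : (x ^ p) ^ (1/p) = x := by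
  rw [← rpow_mul hx, mul_one_div_cancel hp, rpow_one]

lemma crossFn_zero {p a b : ℝ} (ha : a < 0) (hp : 1 < p) : crossFn p a b 0 = -1 := by
  have hp0 : p ≠ 0 := by linarith
  unfold crossFn
  rw [zero_mul, zero_mul, add_zero, add_zero, rpowOneDiv (abs_nonneg a) hp0,
    abs_of_neg ha, div_neg, div_self (by linarith : a ≠ 0)]

lemma crossFn_one {p a b : ℝ} (hb : 0 < b) (hp : 1 < p) : crossFn p a b 1 = 1 := by
  have hp0 : p ≠ 0 := by linarith
  unfold crossFn
  rw [one_mul, one_mul, show a + (b - a) = b by ring,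
    show |a| ^ p + (b ^ p - |a| ^ p) = b ^ p by ring,
    rpowOneDiv hb.le hp0, div_self hb.ne']

lemma crossFn_contOn {p a b : ℝ} (ha : a < 0) (hb : 0 < b) :
    ContinuousOn (crossFn p a b) (Icc 0 1) := by
  apply ContinuousOn.div
  · fun_prop
  · apply ContinuousOn.rpow_const
    · fun_prop
    · intro t ht
      exact Or.inl (den_pos ha hb t ht).ne'
  · intro t ht
    exact (rpow_pos_of_pos (den_pos ha hb t ht) _).ne'

-- strict bound: -1 < z  where z = crossFn p a b tz, tz ∈ (0,1)
lemma neg_one_lt {p a b tz : ℝ} (ha : a < 0) (hb : 0 < b) (hp : 1 < p)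
    (htz : tz ∈ Ioo (0:ℝ) 1) : -1 < crossFn p a b tz := by
  obtain ⟨ht0, ht1⟩ := htz
  set c : ℝ := a + tz * (b - a) with hc
  set D : ℝ := |a| ^ p + tz * (b ^ p - |a| ^ p) with hD
  have hDpos : 0 < D := den_pos ha hb tz ⟨ht0.le, ht1.le⟩
  set M : ℝ := tz * b + (1 - tz) * |a| with hM
  have hMpos : 0 < M := by
    have := abs_pos.mpr ha.ne
    nlinarith
  have hcM : |c| < M := by
    rw [abs_lt]
    constructor
    · have : -M = -(tz * b) + (1 - tz) * a := by rw [hM, abs_of_neg ha]; ring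
      rw [this, hc]; nlinarith
    · rw [hc, hM, abs_of_neg ha]; nlinarith
  -- M^p ≤ (1-tz) |a|^p + tz b^p = D by convexity
  have hconv := (convexOn_rpow hp.le).2 (mem_Ici.mpr hb.le) (mem_Ici.mpr (abs_nonneg a))
      ht0.le (by linarith : (0:ℝ) ≤ 1 - tz) (by ring)
  simp only [smul_eq_mul] at hconv
  have hMD : M ^ p ≤ D := by
    calc M ^ p = (tz * b + (1 - tz) * |a|) ^ p := by rw [hM]
    _ ≤ tz * b ^ p + (1 - tz) * |a| ^ p := hconv
    _ = D := by rw [hD]; ring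
  have hcp : |c| ^ p < D := lt_of_lt_of_le (rpow_lt_rpow (abs_nonneg c) hcM (by linarith)) hMD
  -- hence |c| < D^(1/p)
  have hcD : |c| < D ^ (1/p) := by
    have := rpow_lt_rpow (rpow_nonneg (abs_nonneg c) p) hcp
      (by positivity : (0:ℝ) < 1/p)
    rwa [← rpow_mul (abs_nonneg c), mul_one_div_cancel (by linarith : p ≠ 0), rpow_one] at this
  have hDrp : 0 < D ^ (1/p) := rpow_pos_of_pos hDpos _
  have : -(D ^ (1/p)) < c := by linarith [neg_abs_le c]
  unfold crossFn
  rw [← hc, ← hD, lt_div_iff₀ hDrp]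
  linarith

lemma key_iff {p a b z tz : ℝ} (ha : a < 0) (hb : 0 < b) (hp : 1 < p)
    (hz2 : z < 1) (htz : tz ∈ Ioo (0:ℝ) 1) (hftz : crossFn p a b tz = z)
    (huniq : ∀ t ∈ Set.Ioo (0 : ℝ) 1, crossFn p a b t = z → t = tz) :
    ∀ t ∈ Icc (0:ℝ) 1, (z ≤ crossFn p a b t ↔ tz ≤ t) := by
  have hp0 : p ≠ 0 := by linarith
  have hzneg : -1 < z := hftz ▸ neg_one_lt ha hb hp htz
  have hf0 : crossFn p a b 0 = -1 := crossFn_zero ha hp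
  have hf1 : crossFn p a b 1 = 1 := crossFn_one hb hp
  have hcont := crossFn_contOn (p := p) ha hb
  rintro t ⟨ht0, ht1⟩
  constructor
  · intro hzle
    by_contra hlt
    push_neg at hlt
    -- t < tz, f(t) ≥ z
    rcases eq_or_lt_of_le hzle with heq | hlt2
    · rcases eq_or_lt_of_le ht0 with h0 | h0
      · rw [← h0] at heq; rw [← heq] at hf0; linarith
      · exact absurd (huniq t ⟨h0, lt_of_lt_of_le hlt htz.2.le⟩ heq.symm)
          (by linarith)
    · -- f(0) = -1 < z < f(t), IVT on [0,t]
      have hsub : ContinuousOn (crossFn p a b) (Icc 0 t) :=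
        hcont.mono (Icc_subset_Icc le_rfl ht1)
      have := intermediate_value_Ioo ht0 hsub
      have hz : z ∈ Ioo (crossFn p a b 0) (crossFn p a b t) := ⟨by rw [hf0]; exact hzneg, hlt2⟩
      obtain ⟨t', ht', hft'⟩ := this hz
      have := huniq t' ⟨ht'.1, lt_of_lt_of_le ht'.2 (le_of_lt (lt_of_lt_of_le hlt htz.2.le))⟩ hft'
      linarith [ht'.2]
  · intro htzle
    by_contra hlt
    push_neg at hlt
    -- tz ≤ t, f(t) < z; f(1) = 1 > z; IVT on [t,1]
    have htlt1 : t < 1 := by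
      rcases eq_or_lt_of_le ht1 with h1 | h1
      · rw [h1] at hlt; rw [hf1] at hlt; linarith
      · exact h1
    have hsub : ContinuousOn (crossFn p a b) (Icc t 1) :=
      hcont.mono (Icc_subset_Icc ht0 le_rfl)
    have := intermediate_value_Ioo htlt1.le hsub
    have hz : z ∈ Ioo (crossFn p a b t) (crossFn p a b 1) := ⟨hlt, by rw [hf1]; exact hz2⟩
    obtain ⟨t', ht', hft'⟩ := this hz
    have htne : t ≠ tz := fun h => by rw [h, hftz] at hlt; exact lt_irrefl z hlt
    have := huniq t' ⟨lt_of_le_of_lt ht0 ht'.1, ht'.2⟩ hft'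
    linarith [ht'.1, lt_of_le_of_ne htzle (Ne.symm htne)]

/-- **Event identity, two-point case with `a < 0`.** Let `a < 0 < b`, `z ∈ (f(q), 1)` and
let `t_z ∈ (0,1)` be the unique solution of `f(t) = z`. Then for every `n ≥ 1` the events
`Aₙ(z)` and `{Nₙ ≥ t_z·n}` coincide as subsets of the sample space. -/
theorem event_identity_two_point_a_neg
    {Ω : Type*} [MeasurableSpace Ω] (P : Measure Ω) [IsProbabilityMeasure P]
    (X : ℕ → Ω → ℝ) (hmeas : ∀ i, Measurable (X i))
    (hindep : iIndepFun X P)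
    (a b q : ℝ) (ha : a < 0) (hb : 0 < b) (hq : q ∈ Set.Ioo (0 : ℝ) 1)
    (hval : ∀ j ω, X j ω = a ∨ X j ω = b)
    (hdist : ∀ j, P {ω | X j ω = b} = ENNReal.ofReal q)
    (p : ℝ) (hp : 1 < p)
    (z : ℝ) (hz1 : crossFn p a b q < z) (hz2 : z < 1)
    (tz : ℝ) (htz : tz ∈ Set.Ioo (0 : ℝ) 1) (hftz : crossFn p a b tz = z)
    (huniq : ∀ t ∈ Set.Ioo (0 : ℝ) 1, crossFn p a b t = z → t = tz) :
    ∀ n : ℕ, 1 ≤ n →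
      {ω | z * (n : ℝ) ^ (1 - 1 / p) * (∑ j ∈ Finset.range n, |X j ω| ^ p) ^ (1 / p)
          ≤ ∑ j ∈ Finset.range n, X j ω}
        = {ω | tz * n ≤ (((Finset.range n).filter (fun j => X j ω = b)).card : ℝ)} := by
  intro n hn
  have hn0 : (0:ℝ) < n := by exact_mod_cast hn
  have hp0 : (0:ℝ) < p := by linarith
  ext ω
  simp only [Set.mem_setOf_eq]
  set k : ℕ := ((Finset.range n).filter (fun j => X j ω = b)).card with hk
  have hkn : k ≤ n := le_trans (Finset.card_filter_le _ _) (by simp)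
  set kr : ℝ := (k : ℝ) with hkr
  have hkr0 : 0 ≤ kr := by positivity
  have hkrn : kr ≤ (n:ℝ) := by rw [hkr]; exact_mod_cast hkn
  -- compute the sums
  have hsumX : ∑ j ∈ Finset.range n, X j ω = kr * b + (n - kr) * a := by
    rw [← Finset.sum_filter_add_sum_filter_not (Finset.range n) (fun j => X j ω = b)]
    have h1 : ∑ j ∈ (Finset.range n).filter (fun j => X j ω = b), X j ω = kr * b := by
      rw [Finset.sum_congr rfl (fun j hj => (Finset.mem_filter.mp hj).2)]
      simp [hkr, mul_comm, hk]
    have hcard : (((Finset.range n).filter (fun j => ¬ X j ω = b)).card : ℝ) = n - kr := by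
      have := Finset.card_filter_add_card_filter_not
        (s := Finset.range n) (p := fun j => X j ω = b)
      rw [Finset.card_range] at this
      have : ((Finset.range n).filter (fun j => ¬ X j ω = b)).card = n - k := by omega
      rw [this]
      push_cast [hkn]
      ring
    have h2 : ∑ j ∈ (Finset.range n).filter (fun j => ¬ X j ω = b), X j ω = (n - kr) * a := by
      rw [Finset.sum_congr rfl (fun j hj => ?_), Finset.sum_const, nsmul_eq_mul, hcard]
      exact (hval j ω).resolve_right (Finset.mem_filter.mp hj).2
    rw [h1, h2]
  have hsumT : ∑ j ∈ Finset.range n, |X j ω| ^ p = kr * b ^ p + (n - kr) * |a| ^ p := by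
    rw [← Finset.sum_filter_add_sum_filter_not (Finset.range n) (fun j => X j ω = b)]
    have h1 : ∑ j ∈ (Finset.range n).filter (fun j => X j ω = b), |X j ω| ^ p
        = kr * b ^ p := by
      rw [Finset.sum_congr rfl (fun j hj => ?_), Finset.sum_const, nsmul_eq_mul]
      rw [(Finset.mem_filter.mp hj).2, abs_of_pos hb]
    have hcard : (((Finset.range n).filter (fun j => ¬ X j ω = b)).card : ℝ) = n - kr := by
      have := Finset.card_filter_add_card_filter_not
        (s := Finset.range n) (p := fun j => X j ω = b)
      rw [Finset.card_range] at this
      have : ((Finset.range n).filter (fun j => ¬ X j ω = b)).card = n - k := by omega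
      rw [this]
      push_cast [hkn]
      ring
    have h2 : ∑ j ∈ (Finset.range n).filter (fun j => ¬ X j ω = b), |X j ω| ^ p
        = (n - kr) * |a| ^ p := by
      rw [Finset.sum_congr rfl (fun j hj => ?_), Finset.sum_const, nsmul_eq_mul, hcard]
      rw [(hval j ω).resolve_right (Finset.mem_filter.mp hj).2]
    rw [h1, h2]
  rw [hsumX, hsumT]
  -- introduce t = kr / n
  set t : ℝ := kr / n with ht
  have htIcc : t ∈ Icc (0:ℝ) 1 := ⟨by positivity, by rw [ht, div_le_one hn0]; exact hkrn⟩
  have hDpos : 0 < |a| ^ p + t * (b ^ p - |a| ^ p) := den_pos ha hb t htIcc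
  have hDrp : 0 < (|a| ^ p + t * (b ^ p - |a| ^ p)) ^ (1/p) := rpow_pos_of_pos hDpos _
  have hTrw : kr * b ^ p + (n - kr) * |a| ^ p
      = n * (|a| ^ p + t * (b ^ p - |a| ^ p)) := by
    rw [ht]; field_simp; ring
  have hSrw : kr * b + (n - kr) * a = n * (a + t * (b - a)) := by
    rw [ht]; field_simp; ring
  rw [hTrw, hSrw]
  have hmulrpow : ((n : ℝ) * (|a| ^ p + t * (b ^ p - |a| ^ p))) ^ (1/p)
      = (n : ℝ) ^ (1/p) * (|a| ^ p + t * (b ^ p - |a| ^ p)) ^ (1/p) :=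
    mul_rpow hn0.le hDpos.le
  rw [hmulrpow]
  have hnpow : (n : ℝ) ^ (1 - 1/p) * (n : ℝ) ^ (1/p) = n := by
    rw [← rpow_add hn0]; norm_num
  have hiff1 :
      (z * (n : ℝ) ^ (1 - 1/p) * ((n : ℝ) ^ (1/p) * (|a| ^ p + t * (b ^ p - |a| ^ p)) ^ (1/p))
        ≤ (n : ℝ) * (a + t * (b - a)))
      ↔ z * (|a| ^ p + t * (b ^ p - |a| ^ p)) ^ (1/p) ≤ a + t * (b - a) := by
    have e : z * (n : ℝ) ^ (1 - 1/p) * ((n : ℝ) ^ (1/p) * (|a| ^ p + t * (b ^ p - |a| ^ p)) ^ (1/p))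
        = (n : ℝ) * (z * (|a| ^ p + t * (b ^ p - |a| ^ p)) ^ (1/p)) := by
      calc z * (n : ℝ) ^ (1 - 1/p) * ((n : ℝ) ^ (1/p) * (|a| ^ p + t * (b ^ p - |a| ^ p)) ^ (1/p))
          = ((n : ℝ) ^ (1 - 1/p) * (n : ℝ) ^ (1/p)) * (z * (|a| ^ p + t * (b ^ p - |a| ^ p)) ^ (1/p)) := by
            ring
        _ = (n : ℝ) * (z * (|a| ^ p + t * (b ^ p - |a| ^ p)) ^ (1/p)) := by rw [hnpow]
    rw [e]
    exact mul_le_mul_iff_right₀ hn0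
  rw [hiff1, ← le_div_iff₀ hDrp]
  have : (a + t * (b - a)) / (|a| ^ p + t * (b ^ p - |a| ^ p)) ^ (1/p) = crossFn p a b t := rfl
  rw [this, key_iff ha hb hp hz2 htz hftz huniq t htIcc, ht, le_div_iff₀ hn0]
end

section
/- (Event identity, two-point case with a ≥ 0) Let 0 ≤ a < b with b > 0 and let z ∈ (f(q), 1). If a = 0, set t_+ := z^{p/(p−1)} ∈ (0,1); then for every n ≥ 1: A_n(z) = {N_n = 0} ∪ {N_n ≥ t_+·n}. If a > 0, let 0 < t_− < t_+ < 1 be the two solutions of f(t) = z; then for every n ≥ 1: A_n(z) = {N_n ≤ t_−·n} ∪ {N_n ≥ t_+·n}. -/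
open MeasureTheory ProbabilityTheory Real Set
open scoped ENNReal Classical

private lemma rpow_three {c : ℝ} (hc0 : 0 < c) (hc1 : c < 1) {A D r s w : ℝ}
    (hA : 0 ≤ A) (hD : 0 < D) (hr : 0 ≤ r) (hrs : r < s) (hsw : s < w) :
    (w - s) * (A + r * D) ^ c + (s - r) * (A + w * D) ^ c < (w - r) * (A + s * D) ^ c := by
  have hwr : (0:ℝ) < w - r := by linarith
  have hx : (0:ℝ) ≤ A + r * D := by nlinarith
  have hy : (0:ℝ) ≤ A + w * D := by nlinarith
  have hxy : A + r * D ≠ A + w * D := by nlinarith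
  have hl : 0 < (w - s)/(w - r) := div_pos (by linarith) hwr
  have hm : 0 < (s - r)/(w - r) := div_pos (by linarith) hwr
  have hlm : (w - s)/(w - r) + (s - r)/(w - r) = 1 := by field_simp; ring
  have key := (Real.strictConcaveOn_rpow hc0 hc1).2 (Set.mem_Ici.2 hx) (Set.mem_Ici.2 hy)
    hxy hl hm hlm
  simp only [smul_eq_mul] at key
  have harg : (w - s)/(w - r) * (A + r * D) + (s - r)/(w - r) * (A + w * D) = A + s * D := by
    field_simp; ring
  rw [harg] at key
  calc (w - s) * (A + r * D) ^ c + (s - r) * (A + w * D) ^ c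
      = (w - r) * ((w - s)/(w - r) * (A + r * D) ^ c + (s - r)/(w - r) * (A + w * D) ^ c) := by
        field_simp
    _ < (w - r) * (A + s * D) ^ c := by exact (mul_lt_mul_iff_right₀ hwr).2 key

private lemma char_pos {a b p z t₁ t₂ : ℝ} (ha : 0 < a) (hab : a < b) (hp : 1 < p)
    (hz : 0 < z) (ht₁ : 0 < t₁) (h12 : t₁ < t₂) (ht₂ : t₂ < 1)
    (hg1 : a + t₁ * (b - a) = z * (a ^ p + t₁ * (b ^ p - a ^ p)) ^ (1/p))
    (hg2 : a + t₂ * (b - a) = z * (a ^ p + t₂ * (b ^ p - a ^ p)) ^ (1/p))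
    {t : ℝ} (ht0 : 0 ≤ t) :
    z * (a ^ p + t * (b ^ p - a ^ p)) ^ (1/p) ≤ a + t * (b - a) ↔ (t ≤ t₁ ∨ t₂ ≤ t) := by
  have hc0 : 0 < 1/p := by positivity
  have hc1 : 1/p < 1 := by rw [div_lt_one (by linarith)]; linarith
  have hD : 0 < b ^ p - a ^ p := sub_pos.2 (Real.rpow_lt_rpow ha.le hab (by linarith))
  have hA : (0:ℝ) ≤ a ^ p := (Real.rpow_pos_of_pos ha p).le
  set G := (a ^ p + t * (b ^ p - a ^ p)) ^ (1/p) with hGdef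
  constructor
  · intro h
    by_contra hcon
    push_neg at hcon
    obtain ⟨h1, h2⟩ := hcon
    have key := rpow_three hc0 hc1 hA hD ht₁.le h1 h2
    have k3 : (t₂ - t) * (a + t₁*(b-a)) + (t - t₁) * (a + t₂*(b-a)) < (t₂ - t₁) * (z * G) := by
      calc (t₂ - t) * (a + t₁*(b-a)) + (t - t₁) * (a + t₂*(b-a))
          = z * ((t₂ - t) * (a ^ p + t₁ * (b ^ p - a ^ p)) ^ (1/p)
              + (t - t₁) * (a ^ p + t₂ * (b ^ p - a ^ p)) ^ (1/p)) := by
            rw [hg1, hg2]; ring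
        _ < z * ((t₂ - t₁) * G) := (mul_lt_mul_iff_right₀ hz).2 key
        _ = (t₂ - t₁) * (z * G) := by ring
    have k4 : (t₂ - t₁) * (z * G) ≤ (t₂ - t₁) * (a + t*(b-a)) :=
      mul_le_mul_of_nonneg_left h (by linarith)
    have e : (t₂ - t) * (a + t₁*(b-a)) + (t - t₁) * (a + t₂*(b-a))
        = (t₂ - t₁) * (a + t*(b-a)) := by ring
    linarith
  · rintro (h | h)
    · rcases eq_or_lt_of_le h with rfl | hlt
      · exact hg1.ge
      · have key := rpow_three hc0 hc1 hA hD ht0 hlt h12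
        have k3 : (t₂ - t₁) * (z * G) + (t₁ - t) * (a + t₂*(b-a)) < (t₂ - t) * (a + t₁*(b-a)) := by
          calc (t₂ - t₁) * (z * G) + (t₁ - t) * (a + t₂*(b-a))
              = z * ((t₂ - t₁) * G + (t₁ - t) * (a ^ p + t₂ * (b ^ p - a ^ p)) ^ (1/p)) := by
                rw [hg2]; ring
            _ < z * ((t₂ - t) * (a ^ p + t₁ * (b ^ p - a ^ p)) ^ (1/p)) :=
                (mul_lt_mul_iff_right₀ hz).2 key
            _ = (t₂ - t) * (a + t₁*(b-a)) := by rw [hg1]; ring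
        have e : (t₂ - t) * (a + t₁*(b-a)) - (t₁ - t) * (a + t₂*(b-a))
            = (t₂ - t₁) * (a + t*(b-a)) := by ring
        have hfin : (t₂ - t₁) * (z * G) < (t₂ - t₁) * (a + t*(b-a)) := by linarith
        exact ((mul_lt_mul_iff_right₀ (by linarith : (0:ℝ) < t₂ - t₁)).1 hfin).le
    · rcases eq_or_lt_of_le h with rfl | hlt
      · exact hg2.ge
      · have key := rpow_three hc0 hc1 hA hD ht₁.le h12 hlt
        have k3 : (t - t₂) * (a + t₁*(b-a)) + (t₂ - t₁) * (z * G) < (t - t₁) * (a + t₂*(b-a)) := by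
          calc (t - t₂) * (a + t₁*(b-a)) + (t₂ - t₁) * (z * G)
              = z * ((t - t₂) * (a ^ p + t₁ * (b ^ p - a ^ p)) ^ (1/p) + (t₂ - t₁) * G) := by
                rw [hg1]; ring
            _ < z * ((t - t₁) * (a ^ p + t₂ * (b ^ p - a ^ p)) ^ (1/p)) :=
                (mul_lt_mul_iff_right₀ hz).2 key
            _ = (t - t₁) * (a + t₂*(b-a)) := by rw [hg2]; ring
        have e : (t - t₁) * (a + t₂*(b-a)) - (t - t₂) * (a + t₁*(b-a))
            = (t₂ - t₁) * (a + t*(b-a)) := by ring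
        have hfin : (t₂ - t₁) * (z * G) < (t₂ - t₁) * (a + t*(b-a)) := by linarith
        exact ((mul_lt_mul_iff_right₀ (by linarith : (0:ℝ) < t₂ - t₁)).1 hfin).le

/-- **Event identity, two-point case with `a ≥ 0`.** Let `0 ≤ a < b`, `z ∈ (f(q), 1)`.
If `a = 0`, then with `t₊ = z^{p/(p−1)}` one has `Aₙ(z) = {Nₙ = 0} ∪ {Nₙ ≥ t₊·n}` for all
`n ≥ 1`. If `a > 0` and `0 < t₋ < t₊ < 1` are the two solutions of `f(t) = z`, then
`Aₙ(z) = {Nₙ ≤ t₋·n} ∪ {Nₙ ≥ t₊·n}` for all `n ≥ 1`. -/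
theorem event_identity_two_point_a_nonneg
    {Ω : Type*} [MeasurableSpace Ω] (P : Measure Ω) [IsProbabilityMeasure P]
    (X : ℕ → Ω → ℝ) (hmeas : ∀ i, Measurable (X i))
    (hindep : iIndepFun X P)
    (a b q : ℝ) (ha : 0 ≤ a) (hab : a < b) (hb : 0 < b) (hq : q ∈ Set.Ioo (0 : ℝ) 1)
    (hval : ∀ j ω, X j ω = a ∨ X j ω = b)
    (hdist : ∀ j, P {ω | X j ω = b} = ENNReal.ofReal q)
    (p : ℝ) (hp : 1 < p)
    (z : ℝ) (hz1 : crossFn p a b q < z) (hz2 : z < 1) :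
    (a = 0 → ∀ n : ℕ, 1 ≤ n →
        {ω | z * (n : ℝ) ^ (1 - 1 / p) * (∑ j ∈ Finset.range n, |X j ω| ^ p) ^ (1 / p)
            ≤ ∑ j ∈ Finset.range n, X j ω}
          = {ω | ((Finset.range n).filter (fun j => X j ω = b)).card = 0}
            ∪ {ω | z ^ (p / (p - 1)) * n
                ≤ (((Finset.range n).filter (fun j => X j ω = b)).card : ℝ)})
      ∧ (0 < a → ∀ t₁ t₂ : ℝ, 0 < t₁ → t₁ < t₂ → t₂ < 1 →
          crossFn p a b t₁ = z → crossFn p a b t₂ = z →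
          ∀ n : ℕ, 1 ≤ n →
            {ω | z * (n : ℝ) ^ (1 - 1 / p) * (∑ j ∈ Finset.range n, |X j ω| ^ p) ^ (1 / p)
                ≤ ∑ j ∈ Finset.range n, X j ω}
              = {ω | (((Finset.range n).filter (fun j => X j ω = b)).card : ℝ) ≤ t₁ * n}
                ∪ {ω | t₂ * n
                    ≤ (((Finset.range n).filter (fun j => X j ω = b)).card : ℝ)}) := by
  have hq0 := hq.1
  have hq1 := hq.2
  have hp0 : (0:ℝ) < p := by linarith
  have habs : |a| = a := abs_of_nonneg ha
  have hbp : (0:ℝ) < b ^ p := Real.rpow_pos_of_pos hb p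
  have hap : (0:ℝ) ≤ a ^ p := Real.rpow_nonneg ha p
  have hcross_pos : 0 < crossFn p a b q := by
    unfold crossFn
    rw [habs]
    exact div_pos (by nlinarith) (Real.rpow_pos_of_pos (by nlinarith) _)
  have hz0 : 0 < z := hcross_pos.trans hz1
  -- shared reduction: membership in Aₙ(z) in terms of k/n
  have main : ∀ n : ℕ, 1 ≤ n → ∀ ω,
      ((z * (n : ℝ) ^ (1 - 1 / p) * (∑ j ∈ Finset.range n, |X j ω| ^ p) ^ (1 / p)
        ≤ ∑ j ∈ Finset.range n, X j ω)
      ↔ z * (a ^ p + ((((Finset.range n).filter (fun j => X j ω = b)).card : ℝ)/n)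
            * (b ^ p - a ^ p)) ^ (1/p)
          ≤ a + ((((Finset.range n).filter (fun j => X j ω = b)).card : ℝ)/n) * (b - a)) := by
    intro n hn ω
    set k := ((Finset.range n).filter (fun j => X j ω = b)).card with hkdef
    have hkn : k ≤ n := le_trans (Finset.card_filter_le _ _) (le_of_eq (Finset.card_range n))
    have hn0 : (0:ℝ) < n := by exact_mod_cast hn
    set t : ℝ := (k:ℝ)/n with htdef
    have ht0 : 0 ≤ t := by positivity
    have htle : t ≤ 1 := by rw [htdef, div_le_one hn0]; exact_mod_cast hkn
    set m := ((Finset.range n).filter (fun j => ¬ X j ω = b)).card with hmdef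
    have hcard := Finset.card_filter_add_card_filter_not
      (s := Finset.range n) (fun j => X j ω = b)
    rw [Finset.card_range] at hcard
    have hmr : (m:ℝ) = (n:ℝ) - k := by
      have : k + m = n := hcard
      have := congrArg (fun x : ℕ => (x:ℝ)) this
      push_cast at this
      linarith
    have hS : ∑ j ∈ Finset.range n, X j ω = (k:ℝ) * b + (m:ℝ) * a := by
      rw [← Finset.sum_filter_add_sum_filter_not (Finset.range n) (fun j => X j ω = b)]
      congr 1
      · rw [Finset.sum_congr rfl (fun j hj => (Finset.mem_filter.1 hj).2), Finset.sum_const,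
          nsmul_eq_mul]
      · rw [Finset.sum_congr rfl
          (fun j hj => ((hval j ω).resolve_right (Finset.mem_filter.1 hj).2)),
          Finset.sum_const, nsmul_eq_mul]
    have hT : ∑ j ∈ Finset.range n, |X j ω| ^ p = (k:ℝ) * b ^ p + (m:ℝ) * a ^ p := by
      rw [← Finset.sum_filter_add_sum_filter_not (Finset.range n) (fun j => X j ω = b)]
      congr 1
      · rw [Finset.sum_congr rfl
          (fun j hj => by rw [(Finset.mem_filter.1 hj).2, abs_of_pos hb]),
          Finset.sum_const, nsmul_eq_mul]
      · rw [Finset.sum_congr rfl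
          (fun j hj => by
            rw [(hval j ω).resolve_right (Finset.mem_filter.1 hj).2, habs]),
          Finset.sum_const, nsmul_eq_mul]
    have hSn : (k:ℝ) * b + (m:ℝ) * a = n * (a + t * (b - a)) := by
      rw [hmr, htdef]; field_simp; ring
    have hTn : (k:ℝ) * b ^ p + (m:ℝ) * a ^ p = n * (a ^ p + t * (b ^ p - a ^ p)) := by
      rw [hmr, htdef]; field_simp; ring
    have hcnn : 0 ≤ a ^ p + t * (b ^ p - a ^ p) := by
      nlinarith [mul_nonneg (sub_nonneg.2 htle) hap, mul_nonneg ht0 hbp.le]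
    have hnn : (n:ℝ) ^ (1 - 1/p) * (n:ℝ) ^ (1/p) = n := by
      rw [← Real.rpow_add hn0, show 1 - 1/p + 1/p = 1 by ring, Real.rpow_one]
    rw [hS, hT, hSn, hTn, Real.mul_rpow hn0.le hcnn]
    have lhs_eq : z * (n:ℝ) ^ (1 - 1/p)
        * ((n:ℝ) ^ (1/p) * (a ^ p + t * (b ^ p - a ^ p)) ^ (1/p))
        = (n:ℝ) * (z * (a ^ p + t * (b ^ p - a ^ p)) ^ (1/p)) := by
      calc z * (n:ℝ) ^ (1 - 1/p) * ((n:ℝ) ^ (1/p) * (a ^ p + t * (b ^ p - a ^ p)) ^ (1/p))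
          = ((n:ℝ) ^ (1 - 1/p) * (n:ℝ) ^ (1/p)) * (z * (a ^ p + t * (b ^ p - a ^ p)) ^ (1/p)) := by
            ring
        _ = (n:ℝ) * (z * (a ^ p + t * (b ^ p - a ^ p)) ^ (1/p)) := by rw [hnn]
    rw [lhs_eq]
    exact mul_le_mul_iff_right₀ hn0
  constructor
  · -- case a = 0
    rintro rfl n hn
    ext ω
    simp only [Set.mem_setOf_eq, Set.mem_union]
    rw [main n hn ω]
    set k := ((Finset.range n).filter (fun j => X j ω = b)).card with hkdef
    have hn0 : (0:ℝ) < n := by exact_mod_cast hn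
    rw [Real.zero_rpow hp0.ne']
    simp only [zero_add, sub_zero]
    rcases Nat.eq_zero_or_pos k with hk0 | hkpos
    · simp only [hk0, Nat.cast_zero, zero_div, zero_mul,
        Real.zero_rpow (one_div_ne_zero hp0.ne'), mul_zero, le_refl, true_iff]
      exact Or.inl trivial
    · have ht : (0:ℝ) < (k:ℝ)/n := div_pos (by exact_mod_cast hkpos) hn0
      have e1 : ((k:ℝ)/n * b ^ p) ^ (1/p) = ((k:ℝ)/n) ^ (1/p) * b := by
        rw [Real.mul_rpow ht.le hbp.le, ← Real.rpow_mul hb.le,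
          mul_one_div_cancel hp0.ne', Real.rpow_one]
      rw [e1]
      have ht1p : 0 < ((k:ℝ)/n) ^ (1/p) := Real.rpow_pos_of_pos ht _
      have hiff1 : z * (((k:ℝ)/n) ^ (1/p) * b) ≤ (k:ℝ)/n * b
          ↔ z * ((k:ℝ)/n) ^ (1/p) ≤ (k:ℝ)/n := by
        rw [← mul_assoc]
        exact mul_le_mul_iff_left₀ hb
      have hdivp : (k:ℝ)/n / ((k:ℝ)/n) ^ (1/p) = ((k:ℝ)/n) ^ (1 - 1/p) := by
        rw [Real.rpow_sub ht, Real.rpow_one]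
      have hiff2 : z * ((k:ℝ)/n) ^ (1/p) ≤ (k:ℝ)/n ↔ z ≤ ((k:ℝ)/n) ^ (1 - 1/p) := by
        rw [← hdivp, le_div_iff₀ ht1p]
      have hepos : 0 < p/(p-1) := div_pos hp0 (by linarith)
      have hp1ne : p - 1 ≠ 0 := by intro h; linarith [hp]
      have hpne : p ≠ 0 := hp0.ne'
      have hiff3 : z ≤ ((k:ℝ)/n) ^ (1 - 1/p) ↔ z ^ (p/(p-1)) ≤ (k:ℝ)/n := by
        rw [← Real.rpow_le_rpow_iff hz0.le (Real.rpow_nonneg ht.le _) hepos,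
          ← Real.rpow_mul ht.le, show (1 - 1/p) * (p/(p-1)) = 1 by field_simp,
          Real.rpow_one]
      rw [hiff1, hiff2, hiff3, ← le_div_iff₀ hn0]
      simp [hkpos.ne']
  · -- case a > 0
    intro ha' t₁ t₂ ht₁ h12 ht₂ hf1 hf2 n hn
    have hD : 0 < b ^ p - a ^ p := sub_pos.2 (Real.rpow_lt_rpow ha hab hp0)
    have hap' : 0 < a ^ p := Real.rpow_pos_of_pos ha' p
    have hg : ∀ s : ℝ, 0 < s → crossFn p a b s = z →
        a + s * (b - a) = z * (a ^ p + s * (b ^ p - a ^ p)) ^ (1/p) := by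
      intro s hs hcf
      unfold crossFn at hcf
      rw [habs] at hcf
      have hden : (0:ℝ) < (a ^ p + s * (b ^ p - a ^ p)) ^ (1/p) :=
        Real.rpow_pos_of_pos (by nlinarith) _
      rw [div_eq_iff hden.ne'] at hcf
      linarith [hcf]
    have hg1 := hg t₁ ht₁ hf1
    have hg2 := hg t₂ (ht₁.trans h12) hf2
    ext ω
    simp only [Set.mem_setOf_eq, Set.mem_union]
    rw [main n hn ω]
    have hn0 : (0:ℝ) < n := by exact_mod_cast hn
    rw [char_pos ha' hab hp hz0 ht₁ h12 ht₂ hg1 hg2 (by positivity),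
      div_le_iff₀ hn0, le_div_iff₀ hn0]
end
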